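/- arXiv:2605.10775 — 5 statements merged into one kernel-verified Lean document; each statement's English description precedes it below -/
import Mathlib

section
/- Assume (A2). A measure μ ∈ P(Ω) with ∫_Ω ‖Φ(w,θ)‖_F dμ(w,θ) < ∞ is a global minimizer of F over P(Ω) if and only if g_μ is identically zero on ℝ^{d_θ} (equivalently, the first variation F'(μ) is identically zero on Ω). -/
open MeasureTheory Filter Set
open scoped RealInnerProductSpace ENNReal NNReal Topology

noncomputable section

variable {Ew Eθ : Type*}
  [NormedAddCommGroup Ew] [InnerProductSpace ℝ Ew] [CompleteSpace Ew]
  [NormedAddCommGroup Eθ] [InnerProductSpace ℝ Eθ] [CompleteSpace Eθ]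
  [MeasurableSpace Ew] [MeasurableSpace Eθ]
  {F : Type*} [NormedAddCommGroup F] [InnerProductSpace ℝ F] [CompleteSpace F]

/-- `g_μ(θ) = φ(θ)* R'(∫ Φ dμ)` where `Φ(w,θ) = φ(θ)w`, so `F'(μ)(w,θ) = ⟨g_μ(θ), w⟩`. -/
def gmu (R : F → ℝ) (φ : Eθ → (Ew →L[ℝ] F)) (μ : Measure (Ew × Eθ)) (θ : Eθ) : Ew :=
  ContinuousLinearMap.adjoint (φ θ) (gradient R (∫ u : Ew × Eθ, φ u.2 u.1 ∂μ))

open Classical in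
/-- The objective `F(μ) = R(∫ Φ dμ)` (`= +∞` when `Φ` is not `μ`-integrable). -/
def Fval (R : F → ℝ) (φ : Eθ → (Ew →L[ℝ] F)) (μ : Measure (Ew × Eθ)) : ℝ≥0∞ :=
  if Integrable (fun u : Ew × Eθ => φ u.2 u.1) μ then
    ENNReal.ofReal (R (∫ u : Ew × Eθ, φ u.2 u.1 ∂μ))
  else ⊤

end

section Aux

variable {F : Type*} [NormedAddCommGroup F] [InnerProductSpace ℝ F] [CompleteSpace F]

lemma aux_line_hasDerivAt (R : F → ℝ) (hR : Differentiable ℝ R) (a v : F) :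
    HasDerivAt (fun t : ℝ => R (a + t • v)) ⟪gradient R a, v⟫ 0 := by
  have h1 : HasDerivAt (fun t : ℝ => a + t • v) v 0 := by
    simpa using ((hasDerivAt_id (0 : ℝ)).smul_const v).const_add a
  have h2 : HasFDerivAt R (InnerProductSpace.toDual ℝ F (gradient R a)) a :=
    (hR a).hasGradientAt.hasFDerivAt
  have h3 : HasFDerivAt R (InnerProductSpace.toDual ℝ F (gradient R a))
      ((fun t : ℝ => a + t • v) 0) := by simpa using h2
  simpa [Function.comp_def] using h3.comp_hasDerivAt 0 h1

lemma aux_deriv_nonneg {f : ℝ → ℝ} {f' : ℝ} (hf : HasDerivAt f f' 0)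
    (h : ∀ t ∈ Set.Ioc (0 : ℝ) 1, f 0 ≤ f t) : 0 ≤ f' := by
  have h2 : Tendsto (slope f 0) (𝓝[>] 0) (𝓝 f') :=
    (hasDerivAt_iff_tendsto_slope.mp hf).mono_left
      (nhdsWithin_mono 0 (fun x hx => ne_of_gt hx))
  refine ge_of_tendsto h2 ?_
  filter_upwards [Ioc_mem_nhdsGT (by norm_num : (0:ℝ) < 1)] with t ht
  have ht0 : 0 < t := ht.1
  have hs : slope f 0 t = (f t - f 0) / t := by simp [slope_def_field]
  rw [hs]
  exact div_nonneg (by linarith [h t ht]) ht0.le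

lemma aux_deriv_le {f : ℝ → ℝ} {f' : ℝ} (hf : HasDerivAt f f' 0)
    (h : ∀ t ∈ Set.Ioc (0 : ℝ) 1, f t - f 0 ≤ t * (f 1 - f 0)) : f' ≤ f 1 - f 0 := by
  have h2 : Tendsto (slope f 0) (𝓝[>] 0) (𝓝 f') :=
    (hasDerivAt_iff_tendsto_slope.mp hf).mono_left
      (nhdsWithin_mono 0 (fun x hx => ne_of_gt hx))
  refine le_of_tendsto h2 ?_
  filter_upwards [Ioc_mem_nhdsGT (by norm_num : (0:ℝ) < 1)] with t ht
  have ht0 : 0 < t := ht.1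
  have hs : slope f 0 t = (f t - f 0) / t := by simp [slope_def_field]
  rw [hs, div_le_iff₀ ht0]
  calc f t - f 0 ≤ t * (f 1 - f 0) := h t ht
  _ = (f 1 - f 0) * t := by ring

omit [InnerProductSpace ℝ F] [CompleteSpace F] in
lemma aux_integrable_dirac {α : Type*} [MeasurableSpace α] {f : α → F}
    (hf : MeasureTheory.StronglyMeasurable f) (a : α) :
    Integrable f (Measure.dirac a) := by
  refine ⟨hf.aestronglyMeasurable, ?_⟩
  rw [HasFiniteIntegral, lintegral_dirac' a hf.enorm]
  exact enorm_lt_top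

end Aux

/-- Under Assumption (A2), a probability measure `μ` in the domain of `F`
is a global minimizer of `F` over `P(Ω)` if and only if `g_μ ≡ 0` (equivalently, the first
variation `F'(μ)(w,θ) = ⟨g_μ(θ),w⟩` vanishes identically on `Ω`). -/
theorem stmt_3 {dw dθ : ℕ} {F : Type*} [NormedAddCommGroup F] [InnerProductSpace ℝ F]
    [CompleteSpace F] [TopologicalSpace.SeparableSpace F]
    (R : F → ℝ) (hR0 : ∀ h, 0 ≤ R h) (hRconv : ConvexOn ℝ Set.univ R)
    (hRdiff : Differentiable ℝ R)
    (hRlip : ∀ s : Set F, Bornology.IsBounded s →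
      ∃ L : ℝ≥0, LipschitzOnWith L (gradient R) s)
    (hRsub : ∀ c : ℝ, ∃ M, ∀ h, R h ≤ c → ‖gradient R h‖ ≤ M)
    (φ : EuclideanSpace ℝ (Fin dθ) → (EuclideanSpace ℝ (Fin dw) →L[ℝ] F))
    (hφb : ∃ C, ∀ θ, ‖φ θ‖ ≤ C) (hφd : Differentiable ℝ φ)
    (hφdb : ∃ C, ∀ θ, ‖fderiv ℝ φ θ‖ ≤ C)
    (hφdl : ∃ L : ℝ≥0, LipschitzWith L (fderiv ℝ φ))
    (μ : Measure (EuclideanSpace ℝ (Fin dw) × EuclideanSpace ℝ (Fin dθ)))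
    [IsProbabilityMeasure μ]
    (hdom : Integrable (fun u : EuclideanSpace ℝ (Fin dw) × EuclideanSpace ℝ (Fin dθ) =>
      φ u.2 u.1) μ) :
    (∀ ν : Measure (EuclideanSpace ℝ (Fin dw) × EuclideanSpace ℝ (Fin dθ)),
      IsProbabilityMeasure ν → Fval R φ μ ≤ Fval R φ ν) ↔ ∀ θ, gmu R φ μ θ = 0 := by
  set Φ : EuclideanSpace ℝ (Fin dw) × EuclideanSpace ℝ (Fin dθ) → F :=
    fun u => φ u.2 u.1 with hΦdef
  have hΦc : Continuous Φ := (hφd.continuous.comp continuous_snd).clm_apply continuous_fst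
  have hΦsm : MeasureTheory.StronglyMeasurable Φ := hΦc.stronglyMeasurable
  set h₀ : F := ∫ u, Φ u ∂μ with hh₀
  set g : F := gradient R h₀ with hg
  constructor
  · -- minimizer ⇒ gmu ≡ 0
    intro hmin θ
    have key : ∀ w : EuclideanSpace ℝ (Fin dw), ⟪g, h₀⟫ ≤ ⟪g, φ θ w⟫ := by
      intro w
      set v : F := φ θ w - h₀ with hv
      have hf := aux_line_hasDerivAt R hRdiff h₀ v
      have hmono : ∀ t ∈ Set.Ioc (0:ℝ) 1,
          (fun t : ℝ => R (h₀ + t • v)) 0 ≤ (fun t : ℝ => R (h₀ + t • v)) t := by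
        intro t ht
        set ν : Measure (EuclideanSpace ℝ (Fin dw) × EuclideanSpace ℝ (Fin dθ)) :=
          ENNReal.ofReal (1 - t) • μ + ENNReal.ofReal t • Measure.dirac (w, θ) with hν
        have ht0 : (0:ℝ) < t := ht.1
        have ht1 : t ≤ 1 := ht.2
        have hprob : IsProbabilityMeasure ν := by
          constructor
          simp only [hν, Measure.add_apply, Measure.smul_apply, smul_eq_mul,
            measure_univ, mul_one]
          rw [← ENNReal.ofReal_add (by linarith) (by linarith)]
          norm_num
        have hint1 : Integrable Φ (ENNReal.ofReal (1 - t) • μ) :=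
          hdom.smul_measure ENNReal.ofReal_ne_top
        have hint2 : Integrable Φ (ENNReal.ofReal t • Measure.dirac (w, θ)) :=
          (aux_integrable_dirac hΦsm _).smul_measure ENNReal.ofReal_ne_top
        have hintν : Integrable Φ ν := by
          rw [hν]; exact integrable_add_measure.mpr ⟨hint1, hint2⟩
        have hval : ∫ u, Φ u ∂ν = h₀ + t • v := by
          rw [hν, integral_add_measure hint1 hint2, integral_smul_measure,
            integral_smul_measure, integral_dirac' Φ _ hΦsm,
            ENNReal.toReal_ofReal (by linarith), ENNReal.toReal_ofReal ht0.le]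
          show (1 - t) • h₀ + t • φ θ w = h₀ + t • (φ θ w - h₀)
          rw [sub_smul, one_smul, smul_sub]
          abel
        have hle := hmin ν hprob
        rw [Fval, Fval, if_pos hdom, if_pos hintν] at hle
        have : R h₀ ≤ R (∫ u, Φ u ∂ν) :=
          (ENNReal.ofReal_le_ofReal_iff (hR0 _)).mp hle
        simpa [hval] using this
      have h0le : 0 ≤ ⟪g, v⟫ := aux_deriv_nonneg hf hmono
      rw [hv, inner_sub_right] at h0le
      linarith
    have hzero : ∀ w : EuclideanSpace ℝ (Fin dw), ⟪gmu R φ μ θ, w⟫ = 0 := by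
      intro w
      have hadj : ∀ w' : EuclideanSpace ℝ (Fin dw), ⟪gmu R φ μ θ, w'⟫ = ⟪g, φ θ w'⟫ := by
        intro w'
        rw [gmu, ContinuousLinearMap.adjoint_inner_left]
      by_contra hne
      set s := ⟪gmu R φ μ θ, w⟫ with hs
      set K := ⟪g, h₀⟫ with hK
      have hc : ∀ c : ℝ, K ≤ c * s := by
        intro c
        have := key (c • w)
        rw [← hadj, real_inner_smul_right] at this
        exact this
      have := hc ((K - 1) / s)
      rw [div_mul_cancel₀ _ hne] at this
      linarith
    have := hzero (gmu R φ μ θ)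
    rwa [real_inner_self_eq_norm_sq, pow_eq_zero_iff (by norm_num), norm_eq_zero] at this
  · -- gmu ≡ 0 ⇒ minimizer
    intro hgz ν hν
    rw [Fval, Fval, if_pos hdom]
    by_cases hint : Integrable Φ ν
    · rw [if_pos hint]
      refine ENNReal.ofReal_le_ofReal ?_
      set hV : F := ∫ u, Φ u ∂ν with hhV
      have hinner0 : ∀ (m : Measure (EuclideanSpace ℝ (Fin dw) × EuclideanSpace ℝ (Fin dθ))),
          Integrable Φ m → ⟪g, ∫ u, Φ u ∂m⟫ = 0 := by
        intro m hm
        have hpt : ∀ u : EuclideanSpace ℝ (Fin dw) × EuclideanSpace ℝ (Fin dθ),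
            (innerSL ℝ g) (Φ u) = 0 := by
          intro u
          have : ⟪g, φ u.2 u.1⟫ = ⟪gmu R φ μ u.2, u.1⟫ := by
            rw [gmu, ContinuousLinearMap.adjoint_inner_left]
          simp only [innerSL_apply_apply, hΦdef, this, hgz u.2, inner_zero_left]
        have h2 := (innerSL ℝ g).integral_comp_comm hm
        simp only [hpt, integral_zero] at h2
        simpa using h2.symm
      set v : F := hV - h₀ with hv
      have hf := aux_line_hasDerivAt R hRdiff h₀ v
      have hfd : ⟪g, v⟫ = 0 := by
        rw [hv, inner_sub_right, hinner0 ν hint, hinner0 μ hdom, sub_zero]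
      rw [hfd] at hf
      have hconv : ∀ t ∈ Set.Ioc (0:ℝ) 1,
          (fun t : ℝ => R (h₀ + t • v)) t - (fun t : ℝ => R (h₀ + t • v)) 0 ≤
            t * ((fun t : ℝ => R (h₀ + t • v)) 1 - (fun t : ℝ => R (h₀ + t • v)) 0) := by
        intro t ht
        have heq : h₀ + t • v = (1 - t) • h₀ + t • hV := by
          rw [hv, sub_smul, one_smul, smul_sub]; abel
        have heq1 : h₀ + (1:ℝ) • v = hV := by rw [hv, one_smul]; abel
        have hcv := hRconv.2 (mem_univ h₀) (mem_univ hV) (by linarith [ht.2] : (0:ℝ) ≤ 1 - t)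
          ht.1.le (by ring)
        simp only [smul_eq_mul] at hcv
        simp only [heq, heq1, zero_smul, add_zero]
        nlinarith [hcv]
      have := aux_deriv_le hf hconv
      simp only [zero_smul, add_zero, one_smul] at this
      have heq1 : h₀ + v = hV := by rw [hv]; abel
      rw [heq1] at this
      linarith
    · rw [if_neg hint]; exact le_top
end

section
/- Let σ: ℝ → ℝ be differentiable with bounded and Lipschitz derivative, let ρ_x be a probability measure on ℝ^{d_in} with finite moments up to order 4, and define Φ: ℝ^{d_out} × ℝ^{d_in} → L²(ρ_x; ℝ^{d_out}) by Φ(w,θ) = (x ↦ σ(⟨θ,x⟩) w). Then Φ is differentiable and satisfies: (i) there is C > 0 with ‖dΦ(w,θ)‖ ≤ C(1+|(w,θ)|) for all (w,θ); (ii) there is C' > 0 such that for every r > 0 and (w₁,θ₁),(w₂,θ₂) in the ball of radius r, ‖dΦ(w₁,θ₁) − dΦ(w₂,θ₂)‖ ≤ C'(1+r)|(w₁,θ₁)−(w₂,θ₂)|. If in addition σ is bounded, then the map φ: θ ↦ (w ↦ σ(⟨θ,·⟩)w) ∈ L(ℝ^{d_out}; L²(ρ_x; ℝ^{d_out})) is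 bounded and differentiable with bounded Lipschitz differential. -/
open MeasureTheory Filter Set
open scoped RealInnerProductSpace ENNReal NNReal Topology

noncomputable section
namespace Stmt10Aux

variable {α : Type*} [MeasurableSpace α] {μ : Measure α}
variable {F : Type*} [NormedAddCommGroup F] [NormedSpace ℝ F]

lemma norm_Lp_le (h : Lp F 2 μ) (g : Lp ℝ 2 μ) (c : ℝ) (hc : 0 ≤ c)
    (hb : ∀ᵐ x ∂μ, ‖h x‖ ≤ c * ‖(g : α → ℝ) x‖) : ‖h‖ ≤ c * ‖g‖ := by
  rw [Lp.norm_def, Lp.norm_def]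
  have h1 : eLpNorm (⇑h) 2 μ ≤ eLpNorm (c • (⇑g)) 2 μ :=
    eLpNorm_mono_ae (hb.mono fun x hx => by
      simpa [norm_smul, abs_of_nonneg hc] using hx)
  rw [eLpNorm_const_smul] at h1
  have hfin : (‖c‖₊ : ℝ≥0∞) * eLpNorm (⇑g) 2 μ ≠ ∞ :=
    ENNReal.mul_ne_top ENNReal.coe_ne_top (Lp.eLpNorm_ne_top g)
  have h2 := ENNReal.toReal_mono hfin (by simpa [ENNReal.smul_def, enorm_eq_nnnorm] using h1)
  rwa [ENNReal.toReal_mul, ENNReal.coe_toReal, coe_nnnorm, Real.norm_eq_abs,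
    abs_of_nonneg hc] at h2

lemma memLp_smul_const (g : Lp ℝ 2 μ) (w : F) :
    MemLp (fun x => (g : α → ℝ) x • w) 2 μ := by
  have h := (Lp.memLp g).const_mul ‖w‖
  refine MemLp.of_le h ((Lp.aestronglyMeasurable g).smul aestronglyMeasurable_const) ?_
  filter_upwards with x
  rw [norm_smul]
  simp [abs_mul, mul_comm]

/-- The bilinear map `(g, w) ↦ (x ↦ g x • w)`, as a linear map. -/
def smulL : Lp ℝ 2 μ →ₗ[ℝ] F →ₗ[ℝ] Lp F 2 μ :=
  (LinearMap.mk₂ ℝ (fun g w => (memLp_smul_const g w).toLp _)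
      (fun g g' w => by
        refine Lp.ext ?_
        filter_upwards [MemLp.coeFn_toLp (memLp_smul_const (g + g') w),
          MemLp.coeFn_toLp (memLp_smul_const g w), MemLp.coeFn_toLp (memLp_smul_const g' w),
          Lp.coeFn_add g g',
          Lp.coeFn_add ((memLp_smul_const g w).toLp _) ((memLp_smul_const g' w).toLp _)]
          with x h1 h2 h3 h4 h5
        rw [h1, h5, Pi.add_apply, h2, h3, h4, Pi.add_apply, add_smul])
      (fun c g w => by
        refine Lp.ext ?_
        filter_upwards [MemLp.coeFn_toLp (memLp_smul_const (c • g) w),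
          MemLp.coeFn_toLp (memLp_smul_const g w),
          Lp.coeFn_smul c g, Lp.coeFn_smul c ((memLp_smul_const g w).toLp _)]
          with x h1 h2 h3 h4
        rw [h1, h4, Pi.smul_apply, h2, h3, Pi.smul_apply, smul_assoc])
      (fun g w w' => by
        refine Lp.ext ?_
        filter_upwards [MemLp.coeFn_toLp (memLp_smul_const g (w + w')),
          MemLp.coeFn_toLp (memLp_smul_const g w), MemLp.coeFn_toLp (memLp_smul_const g w'),
          Lp.coeFn_add ((memLp_smul_const g w).toLp _) ((memLp_smul_const g w').toLp _)]
          with x h1 h2 h3 h5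
        rw [h1, h5, Pi.add_apply, h2, h3, smul_add])
      (fun c g w => by
        refine Lp.ext ?_
        filter_upwards [MemLp.coeFn_toLp (memLp_smul_const g (c • w)),
          MemLp.coeFn_toLp (memLp_smul_const g w),
          Lp.coeFn_smul c ((memLp_smul_const g w).toLp _)]
          with x h1 h2 h4
        rw [h1, h4, Pi.smul_apply, h2, smul_comm]))

lemma smulL_bound : ∀ (g : Lp ℝ 2 μ) (w : F), ‖smulL g w‖ ≤ 1 * ‖g‖ * ‖w‖ :=
  (fun g w => by
      have hb : ∀ᵐ x ∂μ, ‖(((memLp_smul_const g w).toLp _ : Lp F 2 μ) : α → F) x‖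
          ≤ ‖w‖ * ‖(g : α → ℝ) x‖ := by
        filter_upwards [MemLp.coeFn_toLp (memLp_smul_const g w)] with x h1
        rw [h1, norm_smul, mul_comm]
      have h2 := norm_Lp_le _ g ‖w‖ (norm_nonneg w) hb
      show ‖(memLp_smul_const g w).toLp _‖ ≤ 1 * ‖g‖ * ‖w‖
      rw [one_mul]
      calc ‖(memLp_smul_const g w).toLp _‖ ≤ ‖w‖ * ‖g‖ := h2
        _ = ‖g‖ * ‖w‖ := mul_comm _ _)

/-- The bilinear map `(g, w) ↦ (x ↦ g x • w)` from `L²(μ;ℝ) × F` to `L²(μ;F)`. -/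
def smulCLM : Lp ℝ 2 μ →L[ℝ] F →L[ℝ] Lp F 2 μ :=
  LinearMap.mkContinuous₂ smulL 1 smulL_bound

lemma smulCLM_apply (g : Lp ℝ 2 μ) (w : F) :
    smulCLM (μ := μ) g w = (memLp_smul_const g w).toLp _ := rfl

lemma smulCLM_coeFn (g : Lp ℝ 2 μ) (w : F) :
    ⇑(smulCLM (μ := μ) g w) =ᵐ[μ] fun x => (g : α → ℝ) x • w := by
  rw [smulCLM_apply]
  exact MemLp.coeFn_toLp (memLp_smul_const g w)

lemma smulCLM_norm_le (g : Lp ℝ 2 μ) (w : F) : ‖smulCLM (μ := μ) g w‖ ≤ ‖g‖ * ‖w‖ := by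
  have h := smulL_bound g w
  rw [one_mul] at h
  exact h

lemma smulCLM_inner_norm_le (g : Lp ℝ 2 μ) : ‖smulCLM (μ := μ) (F := F) g‖ ≤ ‖g‖ :=
  ContinuousLinearMap.opNorm_le_bound _ (norm_nonneg g) (fun w => smulCLM_norm_le g w)

lemma lip_of_deriv_bound {σ : ℝ → ℝ} (hσd : Differentiable ℝ σ) {M : ℝ}
    (hM : ∀ s, |deriv σ s| ≤ M) (a b : ℝ) : |σ b - σ a| ≤ M * |b - a| := by
  have h := Convex.norm_image_sub_le_of_norm_deriv_le (f := σ) (s := univ)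
    (fun x _ => (hσd x)) (fun x _ => by simpa [Real.norm_eq_abs] using hM x)
    convex_univ (mem_univ a) (mem_univ b)
  simpa [Real.norm_eq_abs] using h

lemma taylor_bound {σ : ℝ → ℝ} (hσd : Differentiable ℝ σ) {L : ℝ≥0}
    (hσ'l : LipschitzWith L (deriv σ)) (a b : ℝ) :
    |σ b - σ a - deriv σ a * (b - a)| ≤ (L : ℝ) * (b - a) ^ 2 := by
  set g : ℝ → ℝ := fun t => σ t - deriv σ a * t with hg
  have hgd : ∀ t, HasDerivAt g (deriv σ t - deriv σ a) t := fun t => by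
    exact ((hσd t).hasDerivAt.sub ((hasDerivAt_id t).const_mul (deriv σ a))).congr_deriv (by simp)
  have key : ‖g b - g a‖ ≤ ((L : ℝ) * |b - a|) * ‖b - a‖ := by
    refine Convex.norm_image_sub_le_of_norm_hasDerivWithin_le (s := segment ℝ a b)
      (fun t _ => (hgd t).hasDerivWithinAt) (fun t ht => ?_) (convex_segment a b)
      (left_mem_segment ℝ a b) (right_mem_segment ℝ a b)
    have h1 : |deriv σ t - deriv σ a| ≤ (L : ℝ) * |t - a| := by
      have := hσ'l.dist_le_mul t a
      simpa [Real.dist_eq] using this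
    have h2 : |t - a| ≤ |b - a| := by
      rw [segment_eq_uIcc] at ht
      exact abs_sub_le_of_uIcc_subset_uIcc (uIcc_subset_uIcc left_mem_uIcc ht)
    rw [Real.norm_eq_abs]
    refine h1.trans ?_
    exact mul_le_mul_of_nonneg_left h2 (by positivity)
  have heq : g b - g a = σ b - σ a - deriv σ a * (b - a) := by simp [hg]; ring
  rw [heq, Real.norm_eq_abs, Real.norm_eq_abs] at key
  refine key.trans (le_of_eq ?_)
  rw [mul_assoc, abs_mul_abs_self, sq]

section G

variable {E : Type*} [NormedAddCommGroup E] [InnerProductSpace ℝ E] [MeasurableSpace E]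
  [BorelSpace E] {μ : Measure E} [IsFiniteMeasure μ]
variable (σ : ℝ → ℝ) (M : ℝ)

lemma inner_cont (θ : E) : Continuous fun x : E => (⟪θ, x⟫ : ℝ) :=
  Continuous.inner continuous_const continuous_id

lemma Gmem (hσc : Continuous σ) (hlip : ∀ a b, |σ b - σ a| ≤ M * |b - a|) (hM0 : 0 ≤ M)
    (hm2 : MemLp (fun x : E => ‖x‖) 2 μ) (θ : E) : MemLp (fun x => σ ⟪θ, x⟫) 2 μ := by
  refine MemLp.of_le ((memLp_const |σ 0|).add (hm2.const_mul (M * ‖θ‖)))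
    (hσc.comp (inner_cont θ)).aestronglyMeasurable ?_
  filter_upwards with x
  have h1 : |σ ⟪θ, x⟫| ≤ |σ 0| + M * |(⟪θ, x⟫ : ℝ)| := by
    have := hlip 0 ⟪θ, x⟫
    rw [sub_zero] at this
    calc |σ ⟪θ, x⟫| ≤ |σ 0| + |σ ⟪θ, x⟫ - σ 0| := by
          have := abs_sub_abs_le_abs_sub (σ ⟪θ, x⟫) (σ 0); linarith [abs_nonneg (σ ⟪θ,x⟫)]
      _ ≤ |σ 0| + M * |(⟪θ, x⟫ : ℝ)| := by linarith
  have h2 : M * |(⟪θ, x⟫ : ℝ)| ≤ M * ‖θ‖ * ‖x‖ := by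
    rw [mul_assoc]
    exact mul_le_mul_of_nonneg_left (abs_real_inner_le_norm θ x) hM0
  have h3 : |σ 0| + M * ‖θ‖ * ‖x‖ ≤ ‖|σ 0| + M * ‖θ‖ * ‖x‖‖ := le_abs_self _
  calc ‖σ ⟪θ, x⟫‖ = |σ ⟪θ, x⟫| := rfl
    _ ≤ |σ 0| + M * ‖θ‖ * ‖x‖ := by linarith
    _ ≤ ‖(fun x : E => |σ 0| + M * ‖θ‖ * ‖x‖) x‖ := h3

variable {σ M}

/-- `θ ↦ σ(⟪θ,·⟫)` as an element of `L²`. -/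
def Gfun (hσc : Continuous σ) (hlip : ∀ a b, |σ b - σ a| ≤ M * |b - a|) (hM0 : 0 ≤ M)
    (hm2 : MemLp (fun x : E => ‖x‖) 2 μ) (θ : E) : Lp ℝ 2 μ :=
  (Gmem σ M hσc hlip hM0 hm2 θ).toLp _

lemma Gfun_coeFn (hσc : Continuous σ) (hlip : ∀ a b, |σ b - σ a| ≤ M * |b - a|) (hM0 : 0 ≤ M)
    (hm2 : MemLp (fun x : E => ‖x‖) 2 μ) (θ : E) :
    ⇑(Gfun hσc hlip hM0 hm2 θ) =ᵐ[μ] fun x => σ ⟪θ, x⟫ :=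
  MemLp.coeFn_toLp _

lemma Gfun_sub_norm (hσc : Continuous σ) (hlip : ∀ a b, |σ b - σ a| ≤ M * |b - a|) (hM0 : 0 ≤ M)
    (hm2 : MemLp (fun x : E => ‖x‖) 2 μ) (θ₁ θ₂ : E) :
    ‖Gfun hσc hlip hM0 hm2 θ₁ - Gfun hσc hlip hM0 hm2 θ₂‖ ≤ M * ‖hm2.toLp _‖ * ‖θ₁ - θ₂‖ := by
  have h := norm_Lp_le (Gfun hσc hlip hM0 hm2 θ₁ - Gfun hσc hlip hM0 hm2 θ₂) (hm2.toLp _)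
    (M * ‖θ₁ - θ₂‖) (by positivity) ?_
  · calc _ ≤ M * ‖θ₁ - θ₂‖ * ‖hm2.toLp _‖ := h
      _ = M * ‖hm2.toLp _‖ * ‖θ₁ - θ₂‖ := by ring
  filter_upwards [Lp.coeFn_sub (Gfun hσc hlip hM0 hm2 θ₁) (Gfun hσc hlip hM0 hm2 θ₂),
    Gfun_coeFn hσc hlip hM0 hm2 θ₁, Gfun_coeFn hσc hlip hM0 hm2 θ₂, hm2.coeFn_toLp]
    with x h1 h2 h3 h4
  rw [h1, Pi.sub_apply, h2, h3, h4]
  have h5 := hlip ⟪θ₂, x⟫ ⟪θ₁, x⟫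
  have h6 : (⟪θ₁, x⟫ : ℝ) - ⟪θ₂, x⟫ = ⟪θ₁ - θ₂, x⟫ := (inner_sub_left θ₁ θ₂ x).symm
  rw [h6] at h5
  have h7 : |(⟪θ₁ - θ₂, x⟫ : ℝ)| ≤ ‖θ₁ - θ₂‖ * ‖x‖ := abs_real_inner_le_norm _ x
  calc ‖σ ⟪θ₁, x⟫ - σ ⟪θ₂, x⟫‖ = |σ ⟪θ₁, x⟫ - σ ⟪θ₂, x⟫| := rfl
    _ ≤ M * (‖θ₁ - θ₂‖ * ‖x‖) := h5.trans (mul_le_mul_of_nonneg_left h7 hM0)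
    _ ≤ M * ‖θ₁ - θ₂‖ * ‖‖x‖‖ := by rw [norm_norm]; ring_nf; exact le_refl _
    _ = M * ‖θ₁ - θ₂‖ * ‖(fun x : E => ‖x‖) x‖ := rfl

lemma G'mem (hσ'c : Continuous (deriv σ)) (hM : ∀ s, |deriv σ s| ≤ M)
    (hm2 : MemLp (fun x : E => ‖x‖) 2 μ) (θ η : E) :
    MemLp (fun x => deriv σ ⟪θ, x⟫ * ⟪η, x⟫) 2 μ := by
  refine MemLp.of_le (hm2.const_mul (M * ‖η‖))
    (((hσ'c.comp (inner_cont θ)).mul (inner_cont η)).aestronglyMeasurable) ?_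
  filter_upwards with x
  have hM0 : 0 ≤ M := (abs_nonneg _).trans (hM 0)
  calc ‖deriv σ ⟪θ, x⟫ * ⟪η, x⟫‖ = |deriv σ ⟪θ, x⟫| * |(⟪η, x⟫ : ℝ)| := abs_mul _ _
    _ ≤ M * (‖η‖ * ‖x‖) :=
        mul_le_mul (hM _) (abs_real_inner_le_norm η x) (abs_nonneg _) hM0
    _ ≤ ‖M * ‖η‖ * ‖x‖‖ := by rw [← mul_assoc]; exact le_abs_self _
    _ = ‖(fun x : E => M * ‖η‖ * (fun x : E => ‖x‖) x) x‖ := by norm_num [mul_assoc]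

/-- The candidate derivative of `Gfun`, as a linear map. -/
def G'lin (hσ'c : Continuous (deriv σ)) (hM : ∀ s, |deriv σ s| ≤ M)
    (hm2 : MemLp (fun x : E => ‖x‖) 2 μ) (θ : E) : E →ₗ[ℝ] Lp ℝ 2 μ where
  toFun η := (G'mem hσ'c hM hm2 θ η).toLp _
  map_add' η₁ η₂ := by
    refine Lp.ext ?_
    filter_upwards [MemLp.coeFn_toLp (G'mem hσ'c hM hm2 θ (η₁ + η₂)),
      MemLp.coeFn_toLp (G'mem hσ'c hM hm2 θ η₁), MemLp.coeFn_toLp (G'mem hσ'c hM hm2 θ η₂),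
      Lp.coeFn_add ((G'mem hσ'c hM hm2 θ η₁).toLp _) ((G'mem hσ'c hM hm2 θ η₂).toLp _)]
      with x h1 h2 h3 h4
    rw [h1, h4, Pi.add_apply, h2, h3, inner_add_left]
    ring
  map_smul' c η := by
    refine Lp.ext ?_
    filter_upwards [MemLp.coeFn_toLp (G'mem hσ'c hM hm2 θ (c • η)),
      MemLp.coeFn_toLp (G'mem hσ'c hM hm2 θ η),
      Lp.coeFn_smul c ((G'mem hσ'c hM hm2 θ η).toLp _)] with x h1 h2 h3
    simp only [RingHom.id_apply]
    rw [h1, h3, Pi.smul_apply, h2, real_inner_smul_left]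
    simp [smul_eq_mul]
    ring

lemma G'lin_norm (hσ'c : Continuous (deriv σ)) (hM : ∀ s, |deriv σ s| ≤ M)
    (hm2 : MemLp (fun x : E => ‖x‖) 2 μ) (θ η : E) :
    ‖G'lin hσ'c hM hm2 θ η‖ ≤ M * ‖hm2.toLp _‖ * ‖η‖ := by
  have hM0 : 0 ≤ M := (abs_nonneg _).trans (hM 0)
  have h := norm_Lp_le ((G'mem hσ'c hM hm2 θ η).toLp _) (hm2.toLp _) (M * ‖η‖)
    (by positivity) ?_
  · calc ‖G'lin hσ'c hM hm2 θ η‖ = ‖(G'mem hσ'c hM hm2 θ η).toLp _‖ := rfl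
      _ ≤ M * ‖η‖ * ‖hm2.toLp _‖ := h
      _ = M * ‖hm2.toLp _‖ * ‖η‖ := by ring
  filter_upwards [MemLp.coeFn_toLp (G'mem hσ'c hM hm2 θ η), hm2.coeFn_toLp] with x h1 h2
  rw [h1, h2, norm_norm]
  calc ‖deriv σ ⟪θ, x⟫ * ⟪η, x⟫‖ = |deriv σ ⟪θ, x⟫| * |(⟪η, x⟫ : ℝ)| := abs_mul _ _
    _ ≤ M * (‖η‖ * ‖x‖) :=
        mul_le_mul (hM _) (abs_real_inner_le_norm η x) (abs_nonneg _) hM0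
    _ = M * ‖η‖ * ‖x‖ := by ring

/-- The candidate derivative of `Gfun`, as a continuous linear map. -/
def G'c (hσ'c : Continuous (deriv σ)) (hM : ∀ s, |deriv σ s| ≤ M)
    (hm2 : MemLp (fun x : E => ‖x‖) 2 μ) (θ : E) : E →L[ℝ] Lp ℝ 2 μ :=
  (G'lin hσ'c hM hm2 θ).mkContinuous (M * ‖hm2.toLp _‖) (G'lin_norm hσ'c hM hm2 θ)

lemma G'c_coeFn (hσ'c : Continuous (deriv σ)) (hM : ∀ s, |deriv σ s| ≤ M)
    (hm2 : MemLp (fun x : E => ‖x‖) 2 μ) (θ η : E) :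
    ⇑(G'c hσ'c hM hm2 θ η) =ᵐ[μ] fun x => deriv σ ⟪θ, x⟫ * ⟪η, x⟫ :=
  MemLp.coeFn_toLp (G'mem hσ'c hM hm2 θ η)

lemma G'c_opNorm (hσ'c : Continuous (deriv σ)) (hM : ∀ s, |deriv σ s| ≤ M)
    (hm2 : MemLp (fun x : E => ‖x‖) 2 μ) (θ : E) :
    ‖G'c hσ'c hM hm2 θ‖ ≤ M * ‖hm2.toLp _‖ := by
  have hM0 : 0 ≤ M := (abs_nonneg _).trans (hM 0)
  exact LinearMap.mkContinuous_norm_le _ (by positivity) _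

lemma G'c_sub_opNorm (hσ'c : Continuous (deriv σ)) (hM : ∀ s, |deriv σ s| ≤ M)
    (hm2 : MemLp (fun x : E => ‖x‖) 2 μ) {L : ℝ≥0} (hσ'l : LipschitzWith L (deriv σ))
    (hm4 : MemLp (fun x : E => ‖x‖ ^ 2) 2 μ) (θ₁ θ₂ : E) :
    ‖G'c hσ'c hM hm2 θ₁ - G'c hσ'c hM hm2 θ₂‖ ≤ (L : ℝ) * ‖hm4.toLp _‖ * ‖θ₁ - θ₂‖ := by
  refine ContinuousLinearMap.opNorm_le_bound _ (by positivity) fun η => ?_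
  rw [ContinuousLinearMap.sub_apply]
  have h := norm_Lp_le (G'c hσ'c hM hm2 θ₁ η - G'c hσ'c hM hm2 θ₂ η) (hm4.toLp _)
    ((L : ℝ) * ‖θ₁ - θ₂‖ * ‖η‖) (by positivity) ?_
  · calc _ ≤ (L : ℝ) * ‖θ₁ - θ₂‖ * ‖η‖ * ‖hm4.toLp _‖ := h
      _ = (L : ℝ) * ‖hm4.toLp _‖ * ‖θ₁ - θ₂‖ * ‖η‖ := by ring
  filter_upwards [Lp.coeFn_sub (G'c hσ'c hM hm2 θ₁ η) (G'c hσ'c hM hm2 θ₂ η),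
    G'c_coeFn hσ'c hM hm2 θ₁ η, G'c_coeFn hσ'c hM hm2 θ₂ η, hm4.coeFn_toLp] with x h1 h2 h3 h4
  rw [h1, Pi.sub_apply, h2, h3, h4]
  rw [Real.norm_eq_abs (‖x‖ ^ 2), abs_of_nonneg (by positivity : (0:ℝ) ≤ ‖x‖ ^ 2)]
  have h5 : |deriv σ ⟪θ₁, x⟫ - deriv σ ⟪θ₂, x⟫| ≤ (L : ℝ) * |(⟪θ₁ - θ₂, x⟫ : ℝ)| := by
    have := hσ'l.dist_le_mul ⟪θ₁, x⟫ ⟪θ₂, x⟫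
    rw [Real.dist_eq, Real.dist_eq] at this
    rwa [← inner_sub_left] at this

  calc ‖deriv σ ⟪θ₁, x⟫ * ⟪η, x⟫ - deriv σ ⟪θ₂, x⟫ * ⟪η, x⟫‖
      = |deriv σ ⟪θ₁, x⟫ - deriv σ ⟪θ₂, x⟫| * |(⟪η, x⟫ : ℝ)| := by
        rw [← sub_mul, Real.norm_eq_abs, abs_mul]
    _ ≤ ((L : ℝ) * (‖θ₁ - θ₂‖ * ‖x‖)) * (‖η‖ * ‖x‖) := by
        refine mul_le_mul (h5.trans ?_) (abs_real_inner_le_norm η x) (abs_nonneg _)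
          (by positivity)
        exact mul_le_mul_of_nonneg_left (abs_real_inner_le_norm _ x) L.coe_nonneg
    _ = (L : ℝ) * ‖θ₁ - θ₂‖ * ‖η‖ * ‖x‖ ^ 2 := by ring

lemma Gfun_norm (hσc : Continuous σ) (hlip : ∀ a b, |σ b - σ a| ≤ M * |b - a|) (hM0 : 0 ≤ M)
    (hm2 : MemLp (fun x : E => ‖x‖) 2 μ) (θ : E) :
    ‖Gfun hσc hlip hM0 hm2 θ‖ ≤ ‖Gfun hσc hlip hM0 hm2 0‖ + M * ‖hm2.toLp _‖ * ‖θ‖ := by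
  have h := Gfun_sub_norm hσc hlip hM0 hm2 θ 0
  rw [sub_zero] at h
  have h2 := norm_sub_norm_le (Gfun hσc hlip hM0 hm2 θ) (Gfun hσc hlip hM0 hm2 0)
  linarith

lemma Gfun_norm_of_bounded (hσc : Continuous σ) (hlip : ∀ a b, |σ b - σ a| ≤ M * |b - a|)
    (hM0 : 0 ≤ M) (hm2 : MemLp (fun x : E => ‖x‖) 2 μ) {Mb : ℝ} (hb : ∀ s, |σ s| ≤ Mb)
    (θ : E) :
    ‖Gfun hσc hlip hM0 hm2 θ‖ ≤ Mb * ‖(memLp_const (μ := μ) (p := 2) (1 : ℝ)).toLp _‖ := by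
  refine norm_Lp_le _ _ Mb ((abs_nonneg _).trans (hb 0)) ?_
  filter_upwards [Gfun_coeFn hσc hlip hM0 hm2 θ, (memLp_const (μ := μ) (p := 2) (1 : ℝ)).coeFn_toLp]
    with x h1 h2
  rw [h1, h2]
  simpa using hb ⟪θ, x⟫

lemma Gfun_hasFDerivAt (hσc : Continuous σ) (hσd : Differentiable ℝ σ)
    (hσ'c : Continuous (deriv σ)) (hM : ∀ s, |deriv σ s| ≤ M)
    (hlip : ∀ a b, |σ b - σ a| ≤ M * |b - a|) (hM0 : 0 ≤ M)
    {L : ℝ≥0} (hσ'l : LipschitzWith L (deriv σ))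
    (hm2 : MemLp (fun x : E => ‖x‖) 2 μ) (hm4 : MemLp (fun x : E => ‖x‖ ^ 2) 2 μ) (θ : E) :
    HasFDerivAt (Gfun hσc hlip hM0 hm2) (G'c hσ'c hM hm2 θ) θ := by
  rw [hasFDerivAt_iff_isLittleO_nhds_zero]
  have key : ∀ h : E,
      ‖Gfun hσc hlip hM0 hm2 (θ + h) - Gfun hσc hlip hM0 hm2 θ - G'c hσ'c hM hm2 θ h‖
        ≤ ((L : ℝ) * ‖hm4.toLp _‖) * ‖h‖ ^ 2 := by
    intro h
    have hb := norm_Lp_le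
      (Gfun hσc hlip hM0 hm2 (θ + h) - Gfun hσc hlip hM0 hm2 θ - G'c hσ'c hM hm2 θ h)
      (hm4.toLp _) ((L : ℝ) * ‖h‖ ^ 2) (by positivity) ?_
    · calc _ ≤ (L : ℝ) * ‖h‖ ^ 2 * ‖hm4.toLp _‖ := hb
        _ = ((L : ℝ) * ‖hm4.toLp _‖) * ‖h‖ ^ 2 := by ring
    filter_upwards [Lp.coeFn_sub
        (Gfun hσc hlip hM0 hm2 (θ + h) - Gfun hσc hlip hM0 hm2 θ) (G'c hσ'c hM hm2 θ h),
      Lp.coeFn_sub (Gfun hσc hlip hM0 hm2 (θ + h)) (Gfun hσc hlip hM0 hm2 θ),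
      Gfun_coeFn hσc hlip hM0 hm2 (θ + h), Gfun_coeFn hσc hlip hM0 hm2 θ,
      G'c_coeFn hσ'c hM hm2 θ h, hm4.coeFn_toLp] with x h1 h2 h3 h4 h5 h6
    rw [h1, Pi.sub_apply, h2, Pi.sub_apply, h3, h4, h5, h6]
    rw [Real.norm_eq_abs (‖x‖ ^ 2), abs_of_nonneg (by positivity : (0:ℝ) ≤ ‖x‖ ^ 2)]
    have ht := taylor_bound hσd hσ'l ⟪θ, x⟫ ⟪θ + h, x⟫
    have hi : (⟪θ + h, x⟫ : ℝ) - ⟪θ, x⟫ = ⟪h, x⟫ := by rw [inner_add_left]; ring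
    rw [hi] at ht
    calc ‖σ ⟪θ + h, x⟫ - σ ⟪θ, x⟫ - deriv σ ⟪θ, x⟫ * ⟪h, x⟫‖
        ≤ (L : ℝ) * (⟪h, x⟫ : ℝ) ^ 2 := ht
      _ ≤ (L : ℝ) * (‖h‖ * ‖x‖) ^ 2 := by
          refine mul_le_mul_of_nonneg_left ?_ L.coe_nonneg
          rw [← sq_abs]
          exact pow_le_pow_left₀ (abs_nonneg _) (abs_real_inner_le_norm h x) 2
      _ = (L : ℝ) * ‖h‖ ^ 2 * ‖x‖ ^ 2 := by ring
  have hbig : (fun h : E =>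
      Gfun hσc hlip hM0 hm2 (θ + h) - Gfun hσc hlip hM0 hm2 θ - G'c hσ'c hM hm2 θ h)
      =O[𝓝 0] (fun h : E => ‖h‖ ^ 2) := by
    refine Asymptotics.IsBigO.of_bound ((L : ℝ) * ‖hm4.toLp _‖) (Filter.Eventually.of_forall
      fun h => ?_)
    rw [Real.norm_eq_abs (‖h‖ ^ 2), abs_of_nonneg (by positivity : (0:ℝ) ≤ ‖h‖ ^ 2)]
    exact key h
  refine hbig.trans_isLittleO ?_
  rw [Asymptotics.isLittleO_iff]
  intro c hc
  rw [Metric.eventually_nhds_iff]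
  refine ⟨c, hc, fun {h} hh => ?_⟩
  rw [dist_zero_right] at hh
  rw [Real.norm_eq_abs (‖h‖ ^ 2), abs_of_nonneg (by positivity : (0:ℝ) ≤ ‖h‖ ^ 2), sq]
  exact mul_le_mul_of_nonneg_right hh.le (norm_nonneg h)

end G

end Stmt10Aux


open Stmt10Aux

set_option maxHeartbeats 8000000 in
/-- For `σ` differentiable with bounded Lipschitz derivative and `ρ_x` with
finite moments up to order 4, the feature map `Φ(w,θ) = σ(⟨θ,·⟩)w ∈ L²(ρ_x;ℝ^{d_out})` is
differentiable, its differential has linear growth and is `C'(1+r)`-Lipschitz on balls of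
radius `r`. If moreover `σ` is bounded, the map `φ : θ ↦ (w ↦ σ(⟨θ,·⟩)w)` is bounded and
differentiable with bounded Lipschitz differential. -/
theorem stmt_10 {din dout : ℕ} (σ : ℝ → ℝ) (hσd : Differentiable ℝ σ)
    (hσ'b : ∃ M, ∀ s, |deriv σ s| ≤ M) (hσ'l : ∃ L : ℝ≥0, LipschitzWith L (deriv σ))
    (ρx : Measure (EuclideanSpace ℝ (Fin din))) [IsProbabilityMeasure ρx]
    (hmom : ∀ i ≤ 4, Integrable (fun x => ‖x‖ ^ i) ρx)
    (Φ : EuclideanSpace ℝ (Fin dout) × EuclideanSpace ℝ (Fin din) →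
      Lp (EuclideanSpace ℝ (Fin dout)) 2 ρx)
    (hΦ : ∀ w θ, (Φ (w, θ) : _ → _) =ᵐ[ρx] fun x => σ ⟪θ, x⟫ • w) :
    (Differentiable ℝ Φ ∧
      (∃ C > 0, ∀ u, ‖fderiv ℝ Φ u‖ ≤ C * (1 + ‖u‖)) ∧
      (∃ C' > 0, ∀ r > 0,
        ∀ u₁ u₂ : EuclideanSpace ℝ (Fin dout) × EuclideanSpace ℝ (Fin din),
          ‖u₁‖ ≤ r → ‖u₂‖ ≤ r →
          ‖fderiv ℝ Φ u₁ - fderiv ℝ Φ u₂‖ ≤ C' * (1 + r) * ‖u₁ - u₂‖)) ∧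
    ((∃ M, ∀ s, |σ s| ≤ M) →
      ∀ φm : EuclideanSpace ℝ (Fin din) →
        (EuclideanSpace ℝ (Fin dout) →L[ℝ] Lp (EuclideanSpace ℝ (Fin dout)) 2 ρx),
        (∀ θ w, (φm θ w : _ → _) =ᵐ[ρx] fun x => σ ⟪θ, x⟫ • w) →
        (∃ C, ∀ θ, ‖φm θ‖ ≤ C) ∧ Differentiable ℝ φm ∧
          (∃ C, ∀ θ, ‖fderiv ℝ φm θ‖ ≤ C) ∧ (∃ L : ℝ≥0, LipschitzWith L (fderiv ℝ φm))) := by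
  obtain ⟨M, hM⟩ := hσ'b
  obtain ⟨L, hσ'l⟩ := hσ'l
  have hM0 : 0 ≤ M := (abs_nonneg _).trans (hM 0)
  have hσc : Continuous σ := hσd.continuous
  have hσ'c : Continuous (deriv σ) := hσ'l.continuous
  have hlip : ∀ a b, |σ b - σ a| ≤ M * |b - a| := fun a b => lip_of_deriv_bound hσd hM a b
  have hm2 : MemLp (fun x : EuclideanSpace ℝ (Fin din) => ‖x‖) 2 ρx := by
    rw [memLp_two_iff_integrable_sq continuous_norm.aestronglyMeasurable]
    exact hmom 2 (by norm_num)
  have hm4 : MemLp (fun x : EuclideanSpace ℝ (Fin din) => ‖x‖ ^ 2) 2 ρx := by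
    rw [memLp_two_iff_integrable_sq (f := fun x : EuclideanSpace ℝ (Fin din) => ‖x‖ ^ 2)
      (continuous_norm.pow 2).aestronglyMeasurable]
    have h4 := hmom 4 le_rfl
    have : (fun x : EuclideanSpace ℝ (Fin din) => (‖x‖ ^ 2) ^ 2)
        = fun x : EuclideanSpace ℝ (Fin din) => ‖x‖ ^ 4 := by
      funext x; ring
    rw [this]
    exact h4
  set c₂ : ℝ := ‖hm2.toLp _‖ with hc₂
  set c₄ : ℝ := ‖hm4.toLp _‖ with hc₄
  have hc₂0 : 0 ≤ c₂ := norm_nonneg _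
  have hc₄0 : 0 ≤ c₄ := norm_nonneg _
  set G := Gfun hσc hlip hM0 hm2 with hGdef
  set G' := G'c hσ'c hM hm2 with hG'def
  set B : Lp ℝ 2 ρx →L[ℝ] EuclideanSpace ℝ (Fin dout) →L[ℝ]
      Lp (EuclideanSpace ℝ (Fin dout)) 2 ρx := smulCLM with hBdef
  have hGd : ∀ θ, HasFDerivAt G (G' θ) θ := fun θ =>
    Gfun_hasFDerivAt hσc hσd hσ'c hM hlip hM0 hσ'l hm2 hm4 θ
  have hG'n : ∀ θ η, ‖G' θ η‖ ≤ M * c₂ * ‖η‖ := fun θ η => G'lin_norm hσ'c hM hm2 θ η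
  have hΦeq : ∀ u : EuclideanSpace ℝ (Fin dout) × EuclideanSpace ℝ (Fin din),
      Φ u = B (G u.2) u.1 := by
    intro u
    refine Lp.ext ?_
    filter_upwards [hΦ u.1 u.2, smulCLM_coeFn (G u.2) u.1,
      Gfun_coeFn hσc hlip hM0 hm2 u.2] with x h1 h2 h3
    rw [h2, h3]
    exact h1
  set Dfun : (EuclideanSpace ℝ (Fin dout) × EuclideanSpace ℝ (Fin din)) →
      (EuclideanSpace ℝ (Fin dout) × EuclideanSpace ℝ (Fin din)) →L[ℝ]
      Lp (EuclideanSpace ℝ (Fin dout)) 2 ρx := fun u =>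
    (B (G u.2)).comp (ContinuousLinearMap.fst ℝ _ _) +
      ((B.comp (G' u.2)).flip u.1).comp (ContinuousLinearMap.snd ℝ _ _) with hDdef
  have hDapply : ∀ u q, Dfun u q = B (G u.2) q.1 + B (G' u.2 q.2) u.1 := by
    intro u q
    simp [hDdef]
  have hΦd : ∀ u, HasFDerivAt Φ (Dfun u) u := by
    intro u
    have hΦfun : Φ = fun v => B (G v.2) v.1 := funext hΦeq
    rw [hΦfun]
    have h1 : HasFDerivAt (fun v : EuclideanSpace ℝ (Fin dout) × EuclideanSpace ℝ (Fin din) =>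
        (B (G v.2), v.1))
        (((B.comp (G' u.2)).comp (ContinuousLinearMap.snd ℝ _ _)).prod
          (ContinuousLinearMap.fst ℝ _ _)) u := by
      refine HasFDerivAt.prodMk ?_ (hasFDerivAt_fst)
      exact B.hasFDerivAt.comp u ((hGd u.2).comp u hasFDerivAt_snd)
    have h2 := (isBoundedBilinearMap_apply
      (𝕜 := ℝ) (E := EuclideanSpace ℝ (Fin dout))
      (F := Lp (EuclideanSpace ℝ (Fin dout)) 2 ρx)).hasFDerivAt (B (G u.2), u.1)
    have h3 := h2.comp u h1
    have h4 : Dfun u = (isBoundedBilinearMap_apply.deriv (B (G u.2), u.1)).comp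
        ((((B.comp (G' u.2)).comp (ContinuousLinearMap.snd ℝ _ _)).prod
          (ContinuousLinearMap.fst ℝ _ _))) := by
      refine ContinuousLinearMap.ext fun q => ?_
      rw [hDapply]
      simp [IsBoundedBilinearMap.deriv_apply]
    rw [h4]
    exact h3
  have hfd : ∀ u, fderiv ℝ Φ u = Dfun u := fun u => (hΦd u).fderiv
  refine ⟨⟨fun u => (hΦd u).differentiableAt, ⟨‖G 0‖ + 2 * (M * c₂) + 1, by positivity,
    fun u => ?_⟩, ⟨2 * (M * c₂) + (L : ℝ) * c₄ + 1, by positivity,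
    fun r hr u₁ u₂ h₁ h₂ => ?_⟩⟩, ?_⟩
  · -- linear growth
    rw [hfd]
    refine ContinuousLinearMap.opNorm_le_bound _ (by positivity) fun q => ?_
    rw [hDapply]
    have t1 : ‖B (G u.2) q.1‖ ≤ (‖G 0‖ + M * c₂ * ‖u.2‖) * ‖q.1‖ := by
      refine (smulCLM_norm_le _ _).trans ?_
      exact mul_le_mul_of_nonneg_right (Gfun_norm hσc hlip hM0 hm2 u.2) (norm_nonneg _)
    have t2 : ‖B (G' u.2 q.2) u.1‖ ≤ M * c₂ * ‖q.2‖ * ‖u.1‖ := by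
      refine (smulCLM_norm_le _ _).trans ?_
      exact mul_le_mul_of_nonneg_right (hG'n u.2 q.2) (norm_nonneg _)
    have hq1 : ‖q.1‖ ≤ ‖q‖ := norm_fst_le q
    have hq2 : ‖q.2‖ ≤ ‖q‖ := norm_snd_le q
    have hu1 : ‖u.1‖ ≤ ‖u‖ := norm_fst_le u
    have hu2 : ‖u.2‖ ≤ ‖u‖ := norm_snd_le u
    calc ‖B (G u.2) q.1 + B (G' u.2 q.2) u.1‖
        ≤ ‖B (G u.2) q.1‖ + ‖B (G' u.2 q.2) u.1‖ := norm_add_le _ _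
      _ ≤ (‖G 0‖ + M * c₂ * ‖u.2‖) * ‖q.1‖ + M * c₂ * ‖q.2‖ * ‖u.1‖ := add_le_add t1 t2
      _ ≤ (‖G 0‖ + M * c₂ * ‖u‖) * ‖q‖ + M * c₂ * ‖q‖ * ‖u‖ := by gcongr
      _ = (‖G 0‖ + 2 * (M * c₂) * ‖u‖) * ‖q‖ := by ring
      _ ≤ (‖G 0‖ + 2 * (M * c₂) + 1) * (1 + ‖u‖) * ‖q‖ := by
          refine mul_le_mul_of_nonneg_right ?_ (norm_nonneg q)
          nlinarith [norm_nonneg u, norm_nonneg (G 0), mul_nonneg hM0 hc₂0,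
            mul_nonneg (norm_nonneg (G 0)) (norm_nonneg u),
            mul_nonneg (mul_nonneg hM0 hc₂0) (norm_nonneg u)]
  · -- Lipschitz on balls
    rw [hfd, hfd]
    refine ContinuousLinearMap.opNorm_le_bound _ (by positivity) fun q => ?_
    rw [ContinuousLinearMap.sub_apply, hDapply, hDapply]
    have hsplit : B (G u₁.2) q.1 + B (G' u₁.2 q.2) u₁.1 -
        (B (G u₂.2) q.1 + B (G' u₂.2 q.2) u₂.1)
        = B (G u₁.2 - G u₂.2) q.1 + (B (G' u₁.2 q.2) (u₁.1 - u₂.1)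
            + B (G' u₁.2 q.2 - G' u₂.2 q.2) u₂.1) := by
      simp only [map_sub, ContinuousLinearMap.sub_apply, ContinuousLinearMap.map_sub]
      abel
    rw [hsplit]
    have hq1 : ‖q.1‖ ≤ ‖q‖ := norm_fst_le q
    have hq2 : ‖q.2‖ ≤ ‖q‖ := norm_snd_le q
    have hd1 : ‖u₁.1 - u₂.1‖ ≤ ‖u₁ - u₂‖ := le_trans (le_of_eq (by simp)) (norm_fst_le (u₁ - u₂))
    have hd2 : ‖u₁.2 - u₂.2‖ ≤ ‖u₁ - u₂‖ := le_trans (le_of_eq (by simp)) (norm_snd_le (u₁ - u₂))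
    have hu21 : ‖u₂.1‖ ≤ r := (norm_fst_le u₂).trans h₂
    have t1 : ‖B (G u₁.2 - G u₂.2) q.1‖ ≤ M * c₂ * ‖u₁ - u₂‖ * ‖q‖ := by
      refine (smulCLM_norm_le _ _).trans ?_
      have := (Gfun_sub_norm hσc hlip hM0 hm2 u₁.2 u₂.2).trans
        (mul_le_mul_of_nonneg_left hd2 (by positivity))
      exact mul_le_mul this hq1 (norm_nonneg _) (by positivity)
    have t2 : ‖B (G' u₁.2 q.2) (u₁.1 - u₂.1)‖ ≤ M * c₂ * ‖u₁ - u₂‖ * ‖q‖ := by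
      refine (smulCLM_norm_le _ _).trans ?_
      have h5 := (hG'n u₁.2 q.2).trans (mul_le_mul_of_nonneg_left hq2 (by positivity))
      calc ‖G' u₁.2 q.2‖ * ‖u₁.1 - u₂.1‖ ≤ (M * c₂ * ‖q‖) * ‖u₁ - u₂‖ :=
            mul_le_mul h5 hd1 (norm_nonneg _) (by positivity)
        _ = M * c₂ * ‖u₁ - u₂‖ * ‖q‖ := by ring
    have t3 : ‖B (G' u₁.2 q.2 - G' u₂.2 q.2) u₂.1‖ ≤ (L : ℝ) * c₄ * r * ‖u₁ - u₂‖ * ‖q‖ := by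
      refine (smulCLM_norm_le _ _).trans ?_
      have h6 : ‖G' u₁.2 q.2 - G' u₂.2 q.2‖ ≤ (L : ℝ) * c₄ * ‖u₁.2 - u₂.2‖ * ‖q.2‖ := by
        have := ((G'c hσ'c hM hm2 u₁.2) - (G'c hσ'c hM hm2 u₂.2)).le_opNorm q.2
        refine this.trans ?_
        exact mul_le_mul_of_nonneg_right
          (G'c_sub_opNorm hσ'c hM hm2 hσ'l hm4 u₁.2 u₂.2) (norm_nonneg _)
      calc ‖G' u₁.2 q.2 - G' u₂.2 q.2‖ * ‖u₂.1‖
          ≤ ((L : ℝ) * c₄ * ‖u₁.2 - u₂.2‖ * ‖q.2‖) * r :=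
            mul_le_mul h6 hu21 (norm_nonneg _) (by positivity)
        _ ≤ ((L : ℝ) * c₄ * ‖u₁ - u₂‖ * ‖q‖) * r := by
            refine mul_le_mul_of_nonneg_right ?_ hr.le
            refine mul_le_mul (mul_le_mul_of_nonneg_left hd2 (by positivity)) hq2
              (norm_nonneg _) (by positivity)
        _ = (L : ℝ) * c₄ * r * ‖u₁ - u₂‖ * ‖q‖ := by ring
    calc ‖B (G u₁.2 - G u₂.2) q.1 + (B (G' u₁.2 q.2) (u₁.1 - u₂.1)
            + B (G' u₁.2 q.2 - G' u₂.2 q.2) u₂.1)‖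
        ≤ ‖B (G u₁.2 - G u₂.2) q.1‖ + (‖B (G' u₁.2 q.2) (u₁.1 - u₂.1)‖
            + ‖B (G' u₁.2 q.2 - G' u₂.2 q.2) u₂.1‖) :=
          (norm_add_le _ _).trans (by gcongr; exact norm_add_le _ _)
      _ ≤ M * c₂ * ‖u₁ - u₂‖ * ‖q‖ + (M * c₂ * ‖u₁ - u₂‖ * ‖q‖
            + (L : ℝ) * c₄ * r * ‖u₁ - u₂‖ * ‖q‖) := by
          exact add_le_add t1 (add_le_add t2 t3)
      _ = (2 * (M * c₂) + (L : ℝ) * c₄ * r) * (‖u₁ - u₂‖ * ‖q‖) := by ring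
      _ ≤ ((2 * (M * c₂) + (L : ℝ) * c₄ + 1) * (1 + r)) * (‖u₁ - u₂‖ * ‖q‖) := by
          refine mul_le_mul_of_nonneg_right ?_
            (mul_nonneg (norm_nonneg _) (norm_nonneg _))
          nlinarith [mul_nonneg hM0 hc₂0, mul_nonneg L.coe_nonneg hc₄0, hr.le,
            mul_nonneg (mul_nonneg hM0 hc₂0) hr.le]
      _ = (2 * (M * c₂) + (L : ℝ) * c₄ + 1) * (1 + r) * ‖u₁ - u₂‖ * ‖q‖ := by ring
  · -- bounded σ case
    rintro ⟨Mb, hMb⟩ φm hφm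
    have hφeq : ∀ θ, φm θ = B (G θ) := by
      intro θ
      refine ContinuousLinearMap.ext fun w => ?_
      refine Lp.ext ?_
      filter_upwards [hφm θ w, smulCLM_coeFn (G θ) w, Gfun_coeFn hσc hlip hM0 hm2 θ]
        with x h1 h2 h3
      rw [h2, h3]
      exact h1
    have hφfun : φm = fun θ => B (G θ) := funext hφeq
    have hφd : ∀ θ, HasFDerivAt φm (B.comp (G' θ)) θ := by
      intro θ
      rw [hφfun]
      exact B.hasFDerivAt.comp θ (hGd θ)
    have hfdφ : ∀ θ, fderiv ℝ φm θ = B.comp (G' θ) := fun θ => (hφd θ).fderiv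
    refine ⟨⟨Mb * ‖(memLp_const (μ := ρx) (p := 2) (1 : ℝ)).toLp _‖, fun θ => ?_⟩,
      fun θ => (hφd θ).differentiableAt, ⟨M * c₂, fun θ => ?_⟩,
      ⟨((L : ℝ) * c₄).toNNReal, ?_⟩⟩
    · rw [hφeq θ]
      exact (smulCLM_inner_norm_le _).trans (Gfun_norm_of_bounded hσc hlip hM0 hm2 hMb θ)
    · rw [hfdφ θ]
      refine ContinuousLinearMap.opNorm_le_bound _ (by positivity) fun η => ?_
      exact (smulCLM_inner_norm_le _).trans (hG'n θ η)
    · refine LipschitzWith.of_dist_le_mul fun θ₁ θ₂ => ?_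
      rw [dist_eq_norm, dist_eq_norm, hfdφ θ₁, hfdφ θ₂,
        Real.coe_toNNReal _ (by positivity)]
      refine ContinuousLinearMap.opNorm_le_bound _ (by positivity) fun η => ?_
      have h7 : (B.comp (G' θ₁) - B.comp (G' θ₂)) η = B ((G' θ₁ - G' θ₂) η) := by
        simp [ContinuousLinearMap.sub_apply, map_sub]
      rw [h7]
      refine (smulCLM_inner_norm_le _).trans ?_
      refine ((G' θ₁ - G' θ₂).le_opNorm η).trans ?_
      calc ‖G' θ₁ - G' θ₂‖ * ‖η‖ ≤ ((L : ℝ) * c₄ * ‖θ₁ - θ₂‖) * ‖η‖ :=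
            mul_le_mul_of_nonneg_right (G'c_sub_opNorm hσ'c hM hm2 hσ'l hm4 θ₁ θ₂)
              (norm_nonneg _)
        _ = (L : ℝ) * c₄ * ‖θ₁ - θ₂‖ * ‖η‖ := rfl
end
end

section
/- Let σ(s) = 1/(1+e^{−s}) be the sigmoid function and assume that the probability measure ρ_x on ℝ^{d_in} has a bounded continuous density with respect to the Lebesgue measure. For r ≥ 0 and θ ∈ ℝ^{d_in}, let φ_r(θ) ∈ L²(ρ_x) be the function x ↦ σ(r⟨θ,x⟩), and let φ_∞(θ) ∈ L²(ρ_x) be the indicator function x ↦ 1_{{⟨θ,x⟩ ≥ 0}}. Then φ_r converges to φ_∞ uniformly on the unit sphere S^{d_in−1}: lim_{r→+∞} sup_{θ ∈ S^{d_in−1}} ‖φ_r(θ) − φ_∞(θ)‖_{L²(ρ_x)} = 0. -/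
open MeasureTheory Filter Set
open scoped RealInnerProductSpace ENNReal NNReal Topology

noncomputable def sigm (t : ℝ) : ℝ := 1 / (1 + Real.exp (-t))

lemma sigm_pos (t : ℝ) : 0 < sigm t := by unfold sigm; positivity

lemma sigm_lt_one (t : ℝ) : sigm t < 1 := by
  unfold sigm; rw [div_lt_one (by positivity)]; linarith [Real.exp_pos (-t)]

lemma sigm_mono : Monotone sigm := by
  intro a b hab
  unfold sigm
  apply div_le_div_of_nonneg_left one_pos.le (by positivity)
  have := Real.exp_le_exp.2 (neg_le_neg hab)
  linarith

lemma sigm_continuous : Continuous sigm := by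
  apply continuous_const.div
  · exact continuous_const.add (Real.continuous_exp.comp continuous_neg)
  · intro t; positivity

noncomputable def hfun (r s : ℝ) : ℝ := (sigm (r * s) - if 0 ≤ s then 1 else 0) ^ 2

lemma hfun_nonneg (r s : ℝ) : 0 ≤ hfun r s := sq_nonneg _

lemma hfun_le_one (r s : ℝ) : hfun r s ≤ 1 := by
  unfold hfun
  have h1 := sigm_pos (r * s)
  have h2 := sigm_lt_one (r * s)
  have : (sigm (r*s) - if 0 ≤ s then 1 else 0)^2 ≤ 1^2 := by
    apply sq_le_sq' <;> split <;> linarith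
  simpa using this

lemma hfun_antitone {r r' : ℝ} (h : r ≤ r') (s : ℝ) : hfun r' s ≤ hfun r s := by
  unfold hfun
  rcases le_or_gt 0 s with hs | hs
  · simp only [if_pos hs]
    have hmono : sigm (r * s) ≤ sigm (r' * s) := sigm_mono (mul_le_mul_of_nonneg_right h hs)
    have h2 := sigm_lt_one (r' * s)
    have h1 := sigm_pos (r * s)
    rw [show (sigm (r*s) - 1)^2 = (1 - sigm (r*s))^2 by ring]
    apply sq_le_sq' <;> linarith
  · simp only [if_neg (not_le.2 hs)]
    have hmono : sigm (r' * s) ≤ sigm (r * s) :=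
      sigm_mono (mul_le_mul_of_nonpos_right h hs.le)
    have h1 := sigm_pos (r' * s)
    apply sq_le_sq' <;> linarith

lemma hfun_tendsto {s : ℝ} (hs : s ≠ 0) :
    Tendsto (fun n : ℕ => hfun n s) atTop (𝓝 0) := by
  rcases hs.lt_or_gt with h | h
  · have h1 : Tendsto (fun n : ℕ => -((n : ℝ) * s)) atTop atTop := by
      have := (tendsto_natCast_atTop_atTop (R := ℝ)).atTop_mul_const (neg_pos.2 h)
      simpa [mul_neg] using this
    have hden : Tendsto (fun n : ℕ => 1 + Real.exp (-((n : ℝ) * s))) atTop atTop :=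
      tendsto_atTop_add_const_left _ 1 (Real.tendsto_exp_atTop.comp h1)
    have hsig : Tendsto (fun n : ℕ => sigm ((n : ℝ) * s)) atTop (𝓝 0) := by
      simpa [sigm, one_div, Pi.inv_def] using hden.inv_tendsto_atTop
    have := (hsig.sub (tendsto_const_nhds (x := (0:ℝ)))).pow 2
    simp only [sub_zero] at this
    rw [show ((0:ℝ))^2 = 0 by norm_num] at this
    refine this.congr fun n => ?_
    simp [hfun, if_neg (not_le.2 h)]
  · have h1 : Tendsto (fun n : ℕ => -((n : ℝ) * s)) atTop atBot := by
      have := (tendsto_natCast_atTop_atTop (R := ℝ)).atTop_mul_const h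
      exact tendsto_neg_atBot_iff.2 this
    have hexp : Tendsto (fun n : ℕ => Real.exp (-((n : ℝ) * s))) atTop (𝓝 0) :=
      Real.tendsto_exp_atBot.comp h1
    have hsig : Tendsto (fun n : ℕ => sigm ((n : ℝ) * s)) atTop (𝓝 1) := by
      have hden : Tendsto (fun n : ℕ => 1 + Real.exp (-((n : ℝ) * s))) atTop (𝓝 1) := by
        simpa using (tendsto_const_nhds (x := (1:ℝ))).add hexp
      have := (tendsto_const_nhds (x := (1:ℝ))).div hden (by norm_num)
      simpa [sigm, Pi.div_def] using this
    have := (hsig.sub (tendsto_const_nhds (x := (1:ℝ)))).pow 2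
    simp only [sub_self] at this
    rw [show ((0:ℝ))^2 = 0 by norm_num] at this
    refine this.congr fun n => ?_
    simp [hfun, if_pos h.le]

/-- For the sigmoid `σ(s) = 1/(1+e^{−s})` and a probability measure `ρ_x`
with a bounded continuous density w.r.t. Lebesgue, the maps `φ_r(θ) = σ(r⟨θ,·⟩)` converge in
`L²(ρ_x)`, uniformly over the unit sphere, to the indicator `φ_∞(θ) = 1_{⟨θ,·⟩ ≥ 0}`. -/
theorem stmt_11 {din : ℕ} (ρx : Measure (EuclideanSpace ℝ (Fin din))) [IsProbabilityMeasure ρx]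
    (ρd : EuclideanSpace ℝ (Fin din) → ℝ) (hcont : Continuous ρd)
    (hnn : ∀ x, 0 ≤ ρd x) (hbdd : ∃ M, ∀ x, ρd x ≤ M)
    (hρ : ρx = volume.withDensity fun x => ENNReal.ofReal (ρd x)) :
    ∀ ε > (0 : ℝ), ∃ r₀ : ℝ, ∀ r ≥ r₀, ∀ θ : EuclideanSpace ℝ (Fin din), ‖θ‖ = 1 →
      Real.sqrt (∫ x, (1 / (1 + Real.exp (-(r * ⟪θ, x⟫))) -
        (if 0 ≤ ⟪θ, x⟫ then (1 : ℝ) else 0)) ^ 2 ∂ρx) ≤ ε := by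
  set E := EuclideanSpace ℝ (Fin din)
  intro ε hε
  -- inner product continuity
  have hinn : ∀ θ : E, Continuous fun x : E => ⟪θ, x⟫ :=
    fun θ => continuous_const.inner continuous_id
  have hinn' : ∀ x : E, Continuous fun θ : E => ⟪θ, x⟫ :=
    fun x => continuous_id.inner continuous_const
  -- measurability and integrability of the integrand
  have hmeas : ∀ (r : ℝ) (θ : E), AEStronglyMeasurable (fun x => hfun r ⟪θ, x⟫) ρx := by
    intro r θ
    have h1 : Measurable fun x : E => sigm (r * ⟪θ, x⟫) :=
      (sigm_continuous.comp (continuous_const.mul (hinn θ))).measurable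
    have hset : MeasurableSet {x : E | 0 ≤ ⟪θ, x⟫} :=
      (isClosed_le continuous_const (hinn θ)).measurableSet
    have h2 : Measurable fun x : E => (if 0 ≤ ⟪θ, x⟫ then (1:ℝ) else 0) :=
      Measurable.ite hset measurable_const measurable_const
    exact (((h1.sub h2).pow_const 2).aestronglyMeasurable).congr
      (ae_of_all _ fun x => by simp [hfun])
  have hbound : ∀ (r : ℝ) (θ : E), ∀ᵐ x ∂ρx, ‖hfun r ⟪θ, x⟫‖ ≤ (1:ℝ) :=
    fun r θ => ae_of_all _ fun x => by
      rw [Real.norm_eq_abs, abs_of_nonneg (hfun_nonneg _ _)]; exact hfun_le_one _ _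
  have hint : ∀ (r : ℝ) (θ : E), Integrable (fun x => hfun r ⟪θ, x⟫) ρx :=
    fun r θ => (integrable_const (1:ℝ)).mono' (hmeas r θ) (hbound r θ)
  set F : ℝ → E → ℝ := fun r θ => ∫ x, hfun r ⟪θ, x⟫ ∂ρx with hFdef
  have hFanti : ∀ {r r' : ℝ}, r ≤ r' → ∀ θ : E, F r' θ ≤ F r θ :=
    fun {r r'} h θ => integral_mono (hint r' θ) (hint r θ) fun x => hfun_antitone h _
  -- a.e. nonvanishing of the inner product
  have hnull : ∀ θ : E, θ ≠ 0 → ∀ᵐ x ∂ρx, ⟪θ, x⟫ ≠ 0 := by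
    intro θ hθ
    have hK : LinearMap.ker ((innerSL ℝ θ : E →L[ℝ] ℝ) : E →ₗ[ℝ] ℝ) ≠ ⊤ := by
      intro h
      have : θ ∈ LinearMap.ker ((innerSL ℝ θ : E →L[ℝ] ℝ) : E →ₗ[ℝ] ℝ) := h ▸ Submodule.mem_top
      rw [LinearMap.mem_ker] at this
      simp only [ContinuousLinearMap.coe_coe, innerSL_apply_apply] at this
      exact hθ (inner_self_eq_zero.1 this)
    have hvol : volume (LinearMap.ker ((innerSL ℝ θ : E →L[ℝ] ℝ) : E →ₗ[ℝ] ℝ) : Set E) = 0 :=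
      Measure.addHaar_submodule _ _ hK
    have hset : {x : E | ⟪θ, x⟫ = 0} = (LinearMap.ker ((innerSL ℝ θ : E →L[ℝ] ℝ) : E →ₗ[ℝ] ℝ) : Set E) := by
      ext x; simp [LinearMap.mem_ker]
    have h0 : ρx {x : E | ⟪θ, x⟫ = 0} = 0 := by
      rw [hρ, hset]
      exact (withDensity_absolutelyContinuous _ _) hvol
    rw [ae_iff]
    simpa using h0
  -- pointwise (in θ) convergence of the integrals
  have hFtends : ∀ θ : E, θ ≠ 0 → Tendsto (fun n : ℕ => F n θ) atTop (𝓝 0) := by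
    intro θ hθ
    have := tendsto_integral_of_dominated_convergence (μ := ρx)
      (F := fun (n : ℕ) x => hfun n ⟪θ, x⟫) (f := fun _ => (0:ℝ)) (bound := fun _ => (1:ℝ))
      (fun n => hmeas n θ) (integrable_const 1) (fun n => hbound n θ)
      ((hnull θ hθ).mono fun x hx => hfun_tendsto hx)
    simpa using this
  -- continuity in θ
  have hca : ∀ (r : ℝ) (x θ₀ : E), ⟪θ₀, x⟫ ≠ 0 →
      ContinuousAt (fun θ : E => hfun r ⟪θ, x⟫) θ₀ := by
    intro r x θ₀ hx
    have hsc : Continuous fun θ : E => sigm (r * ⟪θ, x⟫) :=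
      sigm_continuous.comp (continuous_const.mul (hinn' x))
    rcases hx.lt_or_gt with h | h
    · have hev : ∀ᶠ θ : E in 𝓝 θ₀, ⟪θ, x⟫ < 0 := (hinn' x).continuousAt (Iio_mem_nhds h)
      refine ContinuousAt.congr (f := fun θ : E => (sigm (r * ⟪θ, x⟫) - 0)^2)
        (((hsc.sub continuous_const).pow 2).continuousAt) ?_
      exact hev.mono fun θ hθ => by simp [hfun, if_neg (not_le.2 hθ)]
    · have hev : ∀ᶠ θ : E in 𝓝 θ₀, 0 < ⟪θ, x⟫ := (hinn' x).continuousAt (Ioi_mem_nhds h)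
      refine ContinuousAt.congr (f := fun θ : E => (sigm (r * ⟪θ, x⟫) - 1)^2)
        (((hsc.sub continuous_const).pow 2).continuousAt) ?_
      exact hev.mono fun θ hθ => by simp [hfun, if_pos hθ.le]
  have hFcont : ∀ (n : ℕ) (θ₀ : E), θ₀ ≠ 0 → ContinuousAt (F n) θ₀ := by
    intro n θ₀ hθ₀
    exact continuousAt_of_dominated (bound := fun _ => (1:ℝ))
      (Eventually.of_forall fun θ => hmeas n θ)
      (Eventually.of_forall fun θ => hbound n θ)
      (integrable_const 1)
      ((hnull θ₀ hθ₀).mono fun x hx => hca n x θ₀ hx)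
  -- compactness (Dini) argument on the sphere
  set U : ℕ → Set E := fun n => {θ : E | θ ≠ 0} ∩ (F n) ⁻¹' Iio (ε^2) with hUdef
  have hopen : ∀ n : ℕ, IsOpen (U n) := by
    intro n
    apply ContinuousOn.isOpen_inter_preimage ?_ isOpen_ne isOpen_Iio
    intro θ hθ
    exact (hFcont n θ hθ).continuousWithinAt
  have hcover : Metric.sphere (0:E) 1 ⊆ ⋃ n : ℕ, U n := by
    intro θ hθ
    have hθn : ‖θ‖ = 1 := by simpa using hθ
    have hθ0 : θ ≠ 0 := by intro h; rw [h] at hθn; simp at hθn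
    have : ∀ᶠ n : ℕ in atTop, F n θ < ε^2 :=
      (hFtends θ hθ0).eventually (gt_mem_nhds (by positivity))
    obtain ⟨n, hn⟩ := this.exists
    exact mem_iUnion.2 ⟨n, hθ0, hn⟩
  obtain ⟨t, ht⟩ := (isCompact_sphere (0:E) 1).elim_finite_subcover U hopen hcover
  refine ⟨(t.sup id : ℕ), ?_⟩
  intro r hr θ hθn
  have hθ : θ ∈ Metric.sphere (0:E) 1 := by simpa using hθn
  obtain ⟨n, hnt, hnU⟩ := mem_iUnion₂.1 (ht hθ)
  have hFn : F n θ < ε^2 := hnU.2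
  have hle : (n : ℝ) ≤ r := le_trans (by exact_mod_cast Finset.le_sup (f := id) hnt) hr
  have hFr : F r θ ≤ F n θ := hFanti hle θ
  have key : F r θ ≤ ε^2 := le_of_lt (lt_of_le_of_lt hFr hFn)
  have : Real.sqrt (F r θ) ≤ ε := by
    calc Real.sqrt (F r θ) ≤ Real.sqrt (ε^2) := Real.sqrt_le_sqrt key
    _ = ε := Real.sqrt_sq hε.le
  exact this
end

section
/- Let ρ_X be a probability measure on ℝ^{n×d} with a bounded continuous density with respect to the Lebesgue measure and with ∫_{ℝ^{n×d}} max_{1≤i≤n} |x_i|² dρ_X(X) < +∞. Define ψ(A)(X) = Σ_{i=1}^n [e^{⟨Ax_n,x_i⟩}/Σ_{j=1}^n e^{⟨Ax_n,x_j⟩}] x_i (softmax attention) and the hardmax attention ψ_∞(A)(X) = (1/#Σ(XAx_n)) Σ_{i ∈ Σ(XAx_n)} x_i, where for z ∈ ℝⁿ, Σ(z) = {i : z_i = max_j z_j}. Then lim_{r→+∞} sup_{A ∈ S^{d²−1}} ‖ψ(rA) − ψ_∞(A)‖_{L²(ρ_X;ℝ^d)} = 0, where S^{d²−1} denotes the set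 of d×d matrices of unit Frobenius norm. -/
open MeasureTheory Filter Set
open scoped RealInnerProductSpace ENNReal NNReal Topology

/-- `⟨A x, y⟩` where the matrix `A ∈ ℝ^{d×d}` is encoded as a Euclidean vector indexed by
`Fin d × Fin d` (so that its Euclidean norm is the Frobenius norm). -/
noncomputable def matBilin {d : ℕ} (A : EuclideanSpace ℝ (Fin d × Fin d))
    (x y : EuclideanSpace ℝ (Fin d)) : ℝ :=
  ∑ k, (∑ j, A (k, j) * x j) * y k

/-- The single-head softmax attention map. -/
noncomputable def attnMap {n d : ℕ} (i0 : Fin n) (A : EuclideanSpace ℝ (Fin d × Fin d))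
    (X : Fin n → EuclideanSpace ℝ (Fin d)) : EuclideanSpace ℝ (Fin d) :=
  ∑ i, (Real.exp (matBilin A (X i0) (X i)) /
      ∑ j, Real.exp (matBilin A (X i0) (X j))) • X i

open Classical in
/-- The hardmax attention map: the average of the tokens achieving the maximal score. -/
noncomputable def hardAttnMap {n d : ℕ} (i0 : Fin n) (A : EuclideanSpace ℝ (Fin d × Fin d))
    (X : Fin n → EuclideanSpace ℝ (Fin d)) : EuclideanSpace ℝ (Fin d) :=
  (((Finset.univ.filter fun i : Fin n =>
      ∀ j, matBilin A (X i0) (X j) ≤ matBilin A (X i0) (X i)).card : ℝ))⁻¹ •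
    ∑ i ∈ Finset.univ.filter fun i : Fin n =>
        ∀ j, matBilin A (X i0) (X j) ≤ matBilin A (X i0) (X i), X i

namespace Stmt14

variable {n d : ℕ}


noncomputable def appA (A : EuclideanSpace ℝ (Fin d × Fin d))
    (v : EuclideanSpace ℝ (Fin d)) : EuclideanSpace ℝ (Fin d) :=
  WithLp.toLp 2 (fun k => ∑ j, A (k, j) * v j)

lemma matBilin_eq_inner (A : EuclideanSpace ℝ (Fin d × Fin d))
    (v w : EuclideanSpace ℝ (Fin d)) : matBilin A v w = ⟪appA A v, w⟫ := by
  simp [matBilin, appA, PiLp.inner_apply, mul_comm]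

lemma matBilin_smul (r : ℝ) (A : EuclideanSpace ℝ (Fin d × Fin d))
    (v w : EuclideanSpace ℝ (Fin d)) : matBilin (r • A) v w = r * matBilin A v w := by
  simp [matBilin, Finset.mul_sum, Finset.sum_mul, mul_assoc]

lemma continuous_matBilin_A (v w : EuclideanSpace ℝ (Fin d)) :
    Continuous fun A : EuclideanSpace ℝ (Fin d × Fin d) => matBilin A v w := by
  unfold matBilin
  fun_prop

lemma continuous_matBilin_X (A : EuclideanSpace ℝ (Fin d × Fin d)) (i0 i : Fin n) :
    Continuous fun X : Fin n → EuclideanSpace ℝ (Fin d) => matBilin A (X i0) (X i) := by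
  unfold matBilin
  fun_prop


lemma tendsto_softmax {d n : ℕ} (x : Fin n → EuclideanSpace ℝ (Fin d)) (istar : Fin n)
    (s : ℕ → Fin n → ℝ) (c : Fin n → ℝ)
    (hs : ∀ i, Tendsto (fun k => s k i) atTop (𝓝 (c i)))
    (hlt : ∀ j, j ≠ istar → c j < c istar)
    (r : ℕ → ℝ) (hr : Tendsto r atTop atTop) :
    Tendsto (fun k => ∑ i, (Real.exp (r k * s k i) / ∑ j, Real.exp (r k * s k j)) • x i)
      atTop (𝓝 (x istar)) := by
  have hfun : ∀ (k : ℕ) (i : Fin n), Real.exp (r k * s k i) / ∑ j, Real.exp (r k * s k j)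
      = Real.exp (r k * (s k i - s k istar)) / ∑ j, Real.exp (r k * (s k j - s k istar)) := by
    intro k i
    have hD : (0:ℝ) < ∑ j, Real.exp (r k * s k j) :=
      Finset.sum_pos (fun j _ => Real.exp_pos _) ⟨istar, Finset.mem_univ _⟩
    have hD' : (0:ℝ) < ∑ j, Real.exp (r k * (s k j - s k istar)) :=
      Finset.sum_pos (fun j _ => Real.exp_pos _) ⟨istar, Finset.mem_univ _⟩
    rw [div_eq_div_iff hD.ne' hD'.ne', Finset.mul_sum, Finset.mul_sum]
    refine Finset.sum_congr rfl fun j _ => ?_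
    rw [← Real.exp_add, ← Real.exp_add]
    ring_nf
  have hw : ∀ i, Tendsto (fun k => Real.exp (r k * (s k i - s k istar))) atTop
      (𝓝 (if i = istar then (1:ℝ) else 0)) := by
    intro i
    by_cases hi : i = istar
    · subst hi
      simp only [sub_self, mul_zero, Real.exp_zero, if_pos rfl]
      exact tendsto_const_nhds
    · rw [if_neg hi]
      have h1 : Tendsto (fun k => s k i - s k istar) atTop (𝓝 (c i - c istar)) :=
        (hs i).sub (hs istar)
      have h2 : c i - c istar < 0 := by linarith [hlt i hi]
      exact Real.tendsto_exp_atBot.comp (hr.atTop_mul_neg h2 h1)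
  have hW : Tendsto (fun k => ∑ j, Real.exp (r k * (s k j - s k istar))) atTop (𝓝 1) := by
    have := tendsto_finset_sum Finset.univ (fun j (_ : j ∈ Finset.univ) => hw j)
    simpa [Finset.sum_ite_eq'] using this
  have hcoef : ∀ i, Tendsto (fun k => Real.exp (r k * s k i) / ∑ j, Real.exp (r k * s k j))
      atTop (𝓝 (if i = istar then (1:ℝ) else 0)) := by
    intro i
    simp only [hfun]
    simpa [Pi.div_def] using (hw i).div hW one_ne_zero
  have := tendsto_finset_sum Finset.univ
    (fun i (_ : i ∈ Finset.univ) => (hcoef i).smul_const (x i))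
  simpa [ite_smul, Finset.sum_ite_eq'] using this

lemma hardAttnMap_eq_of_unique (i0 istar : Fin n) (A : EuclideanSpace ℝ (Fin d × Fin d))
    (X : Fin n → EuclideanSpace ℝ (Fin d))
    (h : ∀ j, j ≠ istar → matBilin A (X i0) (X j) < matBilin A (X i0) (X istar)) :
    hardAttnMap i0 A X = X istar := by
  classical
  have hset : (Finset.univ.filter fun i : Fin n =>
      ∀ j, matBilin A (X i0) (X j) ≤ matBilin A (X i0) (X i)) = {istar} := by
    ext i
    simp only [Finset.mem_filter, Finset.mem_univ, true_and, Finset.mem_singleton]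
    have hmem : ∀ j, matBilin A (X i0) (X j) ≤ matBilin A (X i0) (X istar) := by
      intro j
      rcases eq_or_ne j istar with rfl | hj
      · exact le_refl _
      · exact (h j hj).le
    constructor
    · intro hi
      by_contra hne
      exact absurd (hi istar) (not_le.2 (h i hne))
    · intro hi
      exact hi ▸ hmem
  rw [hardAttnMap]
  convert_to ((({istar} : Finset (Fin n)).card : ℝ))⁻¹ • ∑ i ∈ ({istar} : Finset (Fin n)), X i = X istar
  · rw [hset]
  · simp

lemma norm_attnMap_le (i0 : Fin n) (A : EuclideanSpace ℝ (Fin d × Fin d))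
    (X : Fin n → EuclideanSpace ℝ (Fin d)) : ‖attnMap i0 A X‖ ≤ ‖X‖ := by
  have hD : (0:ℝ) < ∑ j, Real.exp (matBilin A (X i0) (X j)) :=
    Finset.sum_pos (fun j _ => Real.exp_pos _) ⟨i0, Finset.mem_univ _⟩
  calc ‖attnMap i0 A X‖ ≤ ∑ i, ‖(Real.exp (matBilin A (X i0) (X i)) /
        ∑ j, Real.exp (matBilin A (X i0) (X j))) • X i‖ := norm_sum_le _ _
    _ ≤ ∑ i, (Real.exp (matBilin A (X i0) (X i)) /
        ∑ j, Real.exp (matBilin A (X i0) (X j))) * ‖X‖ := by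
        refine Finset.sum_le_sum fun i _ => ?_
        rw [norm_smul, Real.norm_eq_abs, abs_of_pos (div_pos (Real.exp_pos _) hD)]
        exact mul_le_mul_of_nonneg_left (norm_le_pi_norm X i)
          (div_pos (Real.exp_pos _) hD).le
    _ = ‖X‖ := by
        rw [← Finset.sum_mul, ← Finset.sum_div, div_self hD.ne', one_mul]

lemma norm_hardAttnMap_le (i0 : Fin n) (A : EuclideanSpace ℝ (Fin d × Fin d))
    (X : Fin n → EuclideanSpace ℝ (Fin d)) : ‖hardAttnMap i0 A X‖ ≤ ‖X‖ := by
  classical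
  rw [hardAttnMap]
  set S := Finset.univ.filter fun i : Fin n =>
      ∀ j, matBilin A (X i0) (X j) ≤ matBilin A (X i0) (X i) with hS
  rcases Finset.eq_empty_or_nonempty S with h | h
  · simp [h]
  · have hc : (0:ℝ) < S.card := by exact_mod_cast Finset.card_pos.2 h
    rw [norm_smul, Real.norm_eq_abs, abs_of_pos (inv_pos.2 hc)]
    calc (S.card : ℝ)⁻¹ * ‖∑ i ∈ S, X i‖ ≤ (S.card : ℝ)⁻¹ * ∑ i ∈ S, ‖X i‖ :=
          mul_le_mul_of_nonneg_left (norm_sum_le _ _) (inv_pos.2 hc).le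
      _ ≤ (S.card : ℝ)⁻¹ * ∑ _i ∈ S, ‖X‖ := by
          refine mul_le_mul_of_nonneg_left (Finset.sum_le_sum fun i _ => norm_le_pi_norm X i)
            (inv_pos.2 hc).le
      _ = ‖X‖ := by
          rw [Finset.sum_const, nsmul_eq_mul, ← mul_assoc, inv_mul_cancel₀ hc.ne', one_mul]

lemma continuous_attnMap (i0 : Fin n) (A : EuclideanSpace ℝ (Fin d × Fin d)) :
    Continuous fun X : Fin n → EuclideanSpace ℝ (Fin d) => attnMap i0 A X := by
  unfold attnMap
  refine continuous_finset_sum _ fun i _ => Continuous.smul (f := fun X : Fin n → EuclideanSpace ℝ (Fin d) => Real.exp (matBilin A (X i0) (X i)) /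
      ∑ j, Real.exp (matBilin A (X i0) (X j))) (g := fun X : Fin n → EuclideanSpace ℝ (Fin d) => X i) ?_ (by fun_prop)
  refine Continuous.div ?_ ?_ ?_
  · exact (continuous_matBilin_X A i0 i).rexp
  · exact continuous_finset_sum _ fun j _ => (continuous_matBilin_X A i0 j).rexp
  · intro X
    exact (Finset.sum_pos (fun j _ => Real.exp_pos _) ⟨i0, Finset.mem_univ _⟩).ne'

lemma measurable_hardAttnMap (i0 : Fin n) (A : EuclideanSpace ℝ (Fin d × Fin d)) :
    Measurable fun X : Fin n → EuclideanSpace ℝ (Fin d) => hardAttnMap i0 A X := by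
  classical
  have hrep : (fun X : Fin n → EuclideanSpace ℝ (Fin d) => hardAttnMap i0 A X)
      = fun X => ∑ S : Finset (Fin n),
        Set.indicator {Y : Fin n → EuclideanSpace ℝ (Fin d) |
            (Finset.univ.filter fun i : Fin n =>
              ∀ j, matBilin A (Y i0) (Y j) ≤ matBilin A (Y i0) (Y i)) = S}
          (fun Y => ((S.card : ℝ))⁻¹ • ∑ i ∈ S, Y i) X := by
    funext X
    set S0 := Finset.univ.filter fun i : Fin n =>
        ∀ j, matBilin A (X i0) (X j) ≤ matBilin A (X i0) (X i) with hS0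
    rw [Finset.sum_eq_single_of_mem S0 (Finset.mem_univ _)]
    · rw [Set.indicator_of_mem (by exact hS0.symm ▸ rfl)]
      rfl
    · intro S _ hS
      exact Set.indicator_of_notMem (fun hmem => hS (by simpa using hmem.symm)) _
  rw [hrep]
  refine Finset.measurable_sum _ fun S _ => Measurable.indicator (by fun_prop) ?_
  have : {Y : Fin n → EuclideanSpace ℝ (Fin d) |
      (Finset.univ.filter fun i : Fin n =>
        ∀ j, matBilin A (Y i0) (Y j) ≤ matBilin A (Y i0) (Y i)) = S}
      = ⋂ i : Fin n, {Y | (i ∈ S ↔ ∀ j, matBilin A (Y i0) (Y j) ≤ matBilin A (Y i0) (Y i))} := by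
    ext Y
    simp only [Set.mem_setOf_eq, Set.mem_iInter, Finset.ext_iff, Finset.mem_filter,
      Finset.mem_univ, true_and]
    exact ⟨fun hY i => (hY i).symm, fun hY i => (hY i).symm⟩
  rw [this]
  refine MeasurableSet.iInter fun i => ?_
  by_cases hiS : i ∈ S
  · simp only [hiS, true_iff, Set.setOf_forall]
    refine MeasurableSet.iInter fun j => ?_
    exact measurableSet_le (continuous_matBilin_X A i0 j).measurable
      (continuous_matBilin_X A i0 i).measurable
  · simp only [hiS, false_iff, not_forall, not_le, Set.setOf_exists]
    exact MeasurableSet.iUnion fun j => measurableSet_lt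
      (continuous_matBilin_X A i0 i).measurable (continuous_matBilin_X A i0 j).measurable

lemma hyperplane_null (u : EuclideanSpace ℝ (Fin d)) (hu : u ≠ 0) (c : ℝ) :
    volume {v : EuclideanSpace ℝ (Fin d) | ⟪u, v⟫ = c} = 0 := by
  have hker : LinearMap.ker (innerSL ℝ u : EuclideanSpace ℝ (Fin d) →ₗ[ℝ] ℝ) ≠ ⊤ := by
    intro htop
    have hmem : u ∈ LinearMap.ker (innerSL ℝ u : EuclideanSpace ℝ (Fin d) →ₗ[ℝ] ℝ) := htop ▸ Submodule.mem_top
    rw [LinearMap.mem_ker] at hmem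
    exact hu (inner_self_eq_zero.mp hmem)
  have huu : ⟪u, u⟫ ≠ 0 := fun h => hu (inner_self_eq_zero.mp h)
  have hset : {v : EuclideanSpace ℝ (Fin d) | ⟪u, v⟫ = c}
      = (fun v => v + -((c / ⟪u, u⟫) • u)) ⁻¹'
        (LinearMap.ker (innerSL ℝ u : EuclideanSpace ℝ (Fin d) →ₗ[ℝ] ℝ) : Set (EuclideanSpace ℝ (Fin d))) := by
    ext v
    simp only [Set.mem_setOf_eq, Set.mem_preimage, SetLike.mem_coe, LinearMap.mem_ker]
    rw [show ((innerSL ℝ u : EuclideanSpace ℝ (Fin d) →ₗ[ℝ] ℝ) (v + -((c / ⟪u, u⟫) • u)) : ℝ)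
        = ⟪u, v + -((c / ⟪u, u⟫) • u)⟫ from rfl]
    rw [inner_add_right, inner_neg_right, real_inner_smul_right,
      div_mul_cancel₀ _ huu]
    constructor
    · intro h; rw [h]; ring
    · intro h; linarith
  rw [hset, measure_preimage_add_right]
  exact Measure.addHaar_submodule _ _ hker

lemma slice_null (m : Fin n)
    (g : (Fin n → EuclideanSpace ℝ (Fin d)) → EuclideanSpace ℝ (Fin d))
    (c : (Fin n → EuclideanSpace ℝ (Fin d)) → ℝ) (hgc : Continuous g) (hcc : Continuous c)
    (hg : ∀ X v, g (Function.update X m v) = g X) (hc : ∀ X v, c (Function.update X m v) = c X) :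
    volume {X : Fin n → EuclideanSpace ℝ (Fin d) | g X ≠ 0 ∧ ⟪g X, X m⟫ = c X} = 0 := by
  classical
  set p : Fin n → Prop := fun k => k ≠ m with hp
  set e := MeasurableEquiv.piEquivPiSubtypeProd (fun _ : Fin n => EuclideanSpace ℝ (Fin d)) p
    with he
  have hmp := volume_preserving_piEquivPiSubtypeProd
    (fun _ : Fin n => EuclideanSpace ℝ (Fin d)) p
  set S := {X : Fin n → EuclideanSpace ℝ (Fin d) | g X ≠ 0 ∧ ⟪g X, X m⟫ = c X} with hS
  have hSm : MeasurableSet S := by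
    have h1 : MeasurableSet {X : Fin n → EuclideanSpace ℝ (Fin d) | g X ≠ 0} :=
      ((isClosed_singleton.preimage hgc).measurableSet).compl
    have h2 : MeasurableSet {X : Fin n → EuclideanSpace ℝ (Fin d) | ⟪g X, X m⟫ = c X} := by
      have hcont : Continuous fun X : Fin n → EuclideanSpace ℝ (Fin d) => ⟪g X, X m⟫ - c X :=
        (hgc.inner (continuous_apply m)).sub hcc
      have hset2 : {X : Fin n → EuclideanSpace ℝ (Fin d) | ⟪g X, X m⟫ = c X}
          = (fun X : Fin n → EuclideanSpace ℝ (Fin d) => ⟪g X, X m⟫ - c X) ⁻¹' {0} := by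
        ext X; simp [sub_eq_zero]
      rw [hset2]
      exact (isClosed_singleton.preimage hcont).measurableSet
    exact h1.inter h2
  haveI hU : Unique {k : Fin n // ¬ p k} :=
    { default := ⟨m, by simp [hp]⟩
      uniq := by rintro ⟨k, hk⟩; simp only [hp, ne_eq, not_not] at hk; exact Subtype.ext hk }
  have hpre : S = e ⁻¹' (e.symm ⁻¹' S) := by
    rw [← Set.preimage_comp, MeasurableEquiv.symm_comp_self, Set.preimage_id]
  have hmeas' : MeasurableSet (e.symm ⁻¹' S) := e.symm.measurable hSm
  rw [hpre, hmp.measure_preimage hmeas'.nullMeasurableSet, Measure.volume_eq_prod,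
    Measure.prod_apply hmeas']
  have hsec : ∀ x : {k : Fin n // p k} → EuclideanSpace ℝ (Fin d),
      volume (Prod.mk x ⁻¹' (e.symm ⁻¹' S)) = 0 := by
    intro x
    set X0 : Fin n → EuclideanSpace ℝ (Fin d) :=
      e.symm (x, fun _ => 0) with hX0
    set u := g X0 with hu
    set cc := c X0 with hcc2
    have happ : ∀ (f : {k : Fin n // ¬ p k} → EuclideanSpace ℝ (Fin d)) (k : Fin n),
        e.symm (x, f) k = if h : p k then x ⟨k, h⟩ else f ⟨k, h⟩ := fun f k => rfl
    have hXm : ∀ f : {k : Fin n // ¬ p k} → EuclideanSpace ℝ (Fin d),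
        e.symm (x, f) m = f default := by
      intro f
      rw [happ, dif_neg (by simp [hp])]
      exact congrArg f (Subsingleton.elim _ _)
    have hupdate : ∀ f : {k : Fin n // ¬ p k} → EuclideanSpace ℝ (Fin d),
        e.symm (x, f) = Function.update X0 m (f default) := by
      intro f
      funext k
      rcases eq_or_ne k m with rfl | hk
      · rw [Function.update_self, hXm]
      · rw [Function.update_of_ne hk, hX0, happ, happ, dif_pos (show p k from hk),
          dif_pos (show p k from hk)]
    have hgu : ∀ f : {k : Fin n // ¬ p k} → EuclideanSpace ℝ (Fin d),
        g (e.symm (x, f)) = u := by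
      intro f; rw [hupdate f, hg]
    have hcu : ∀ f : {k : Fin n // ¬ p k} → EuclideanSpace ℝ (Fin d),
        c (e.symm (x, f)) = cc := by
      intro f; rw [hupdate f, hc]
    have hsecset : Prod.mk x ⁻¹' (e.symm ⁻¹' S)
        = {f : {k : Fin n // ¬ p k} → EuclideanSpace ℝ (Fin d) |
            u ≠ 0 ∧ ⟪u, f default⟫ = cc} := by
      ext f
      simp only [Set.mem_preimage, hS, Set.mem_setOf_eq, hgu, hcu, hXm]
    rw [hsecset]
    by_cases hu0 : u = 0
    · simp [hu0]
    · have hrw : {f : {k : Fin n // ¬ p k} → EuclideanSpace ℝ (Fin d) |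
          u ≠ 0 ∧ ⟪u, f default⟫ = cc}
          = (fun f : {k : Fin n // ¬ p k} → EuclideanSpace ℝ (Fin d) => f default) ⁻¹'
            {v : EuclideanSpace ℝ (Fin d) | ⟪u, v⟫ = cc} := by
        ext f; simp [hu0]
      rw [hrw]
      have hmp2 := volume_preserving_piUnique
        (fun _ : {k : Fin n // ¬ p k} => EuclideanSpace ℝ (Fin d))
      have hhyp : MeasurableSet {v : EuclideanSpace ℝ (Fin d) | ⟪u, v⟫ = cc} := by
        have hcont : Continuous fun v : EuclideanSpace ℝ (Fin d) => ⟪u, v⟫ :=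
          Continuous.inner continuous_const continuous_id
        have : {v : EuclideanSpace ℝ (Fin d) | ⟪u, v⟫ = cc}
            = (fun v : EuclideanSpace ℝ (Fin d) => ⟪u, v⟫) ⁻¹' {cc} := rfl
        rw [this]
        exact (isClosed_singleton.preimage hcont).measurableSet
      rw [show (fun f : {k : Fin n // ¬ p k} → EuclideanSpace ℝ (Fin d) => f default)
          = (MeasurableEquiv.piUnique
              (fun _ : {k : Fin n // ¬ p k} => EuclideanSpace ℝ (Fin d))) from rfl,
        hmp2.measure_preimage hhyp.nullMeasurableSet]
      exact hyperplane_null u hu0 cc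
  simp only [hsec, lintegral_zero]
lemma continuous_appA (A : EuclideanSpace ℝ (Fin d × Fin d)) (i0 : Fin n) :
    Continuous fun X : Fin n → EuclideanSpace ℝ (Fin d) => appA A (X i0) := by
  unfold appA
  fun_prop

lemma bad_null (i0 : Fin n) (A : EuclideanSpace ℝ (Fin d × Fin d)) (hA : A ≠ 0) :
    volume {X : Fin n → EuclideanSpace ℝ (Fin d) |
      ∃ i j : Fin n, i ≠ j ∧ matBilin A (X i0) (X i) = matBilin A (X i0) (X j)} = 0 := by
  classical
  obtain ⟨q0, hq0⟩ : ∃ q : Fin d × Fin d, A q ≠ 0 := by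
    by_contra h
    push_neg at h
    exact hA (by ext q; simpa using h q)
  obtain ⟨k0, j0⟩ := q0
  set u0 : EuclideanSpace ℝ (Fin d) := WithLp.toLp 2 (fun j => A (k0, j)) with hu0def
  have hu0 : u0 ≠ 0 := by
    intro h
    exact hq0 (by simpa [hu0def] using congrArg (fun w : EuclideanSpace ℝ (Fin d) => w j0) h)
  set S0 := {X : Fin n → EuclideanSpace ℝ (Fin d) |
      (fun _ : Fin n → EuclideanSpace ℝ (Fin d) => u0) X ≠ 0 ∧
      ⟪(fun _ : Fin n → EuclideanSpace ℝ (Fin d) => u0) X, X i0⟫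
        = (fun _ : Fin n → EuclideanSpace ℝ (Fin d) => (0:ℝ)) X} with hS0
  have hS0null : volume S0 = 0 :=
    slice_null i0 _ _ continuous_const continuous_const (fun _ _ => rfl) (fun _ _ => rfl)
  set T : Fin n → Fin n → Set (Fin n → EuclideanSpace ℝ (Fin d)) := fun i j =>
    {X | appA A (X i0) ≠ 0 ∧ matBilin A (X i0) (X i) = matBilin A (X i0) (X j) ∧ i ≠ j}
    with hT
  have hTnull : ∀ i j, volume (T i j) = 0 := by
    intro i j
    rcases eq_or_ne i j with rfl | hij
    · have : T i i = ∅ := by ext X; simp [hT]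
      rw [this, measure_empty]
    · set m : Fin n := if i = i0 then j else i with hm
      set o : Fin n := if i = i0 then i else j with ho
      have hmi0 : i0 ≠ m := by
        rw [hm]
        split_ifs with h
        · exact fun hc => hij (h.trans hc)
        · exact fun hc => h hc.symm
      have hom : o ≠ m := by
        rw [ho, hm]
        split_ifs with h
        · exact hij
        · exact fun hc => hij hc.symm
      refine measure_mono_null (fun X hX => ?_)
        (slice_null m (fun X => appA A (X i0)) (fun X => matBilin A (X i0) (X o))
          (continuous_appA A i0) ((continuous_matBilin_X A i0 o)) ?_ ?_)
      · obtain ⟨hne, heq, _⟩ := hX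
        refine ⟨hne, ?_⟩
        rw [← matBilin_eq_inner]
        rcases eq_or_ne i i0 with h | h
        · simp only [hm, ho, if_pos h]
          exact heq.symm
        · simp only [hm, ho, if_neg h]
          exact heq
      · intro X v
        simp only [Function.update_of_ne hmi0]
      · intro X v
        simp only [Function.update_of_ne hmi0, Function.update_of_ne hom]
  refine measure_mono_null (fun X hX => ?_)
    (measure_union_null hS0null (measure_iUnion_null fun i => measure_iUnion_null (hTnull i)))
  obtain ⟨i, j, hij, heq⟩ := hX
  by_cases h0 : appA A (X i0) = 0
  · left
    refine ⟨hu0, ?_⟩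
    have : (appA A (X i0)) k0 = 0 := by rw [h0]; rfl
    simpa [PiLp.inner_apply, hu0def, appA, mul_comm] using this
  · right
    exact Set.mem_iUnion.2 ⟨i, Set.mem_iUnion.2 ⟨j, h0, heq, hij⟩⟩

lemma pointwise_key (i0 : Fin n) (A : EuclideanSpace ℝ (Fin d × Fin d))
    (Ak : ℕ → EuclideanSpace ℝ (Fin d × Fin d)) (hAk : Tendsto Ak atTop (𝓝 A))
    (r : ℕ → ℝ) (hr : Tendsto r atTop atTop)
    (X : Fin n → EuclideanSpace ℝ (Fin d))
    (hX : ∀ i j : Fin n, i ≠ j → matBilin A (X i0) (X i) ≠ matBilin A (X i0) (X j)) :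
    Tendsto (fun k => ‖attnMap i0 (r k • Ak k) X - hardAttnMap i0 (Ak k) X‖ ^ 2)
      atTop (𝓝 0) := by
  obtain ⟨istar, -, hmax⟩ := Finset.exists_max_image Finset.univ
    (fun i => matBilin A (X i0) (X i)) ⟨i0, Finset.mem_univ _⟩
  have hstrict : ∀ j, j ≠ istar → matBilin A (X i0) (X j) < matBilin A (X i0) (X istar) :=
    fun j hj => lt_of_le_of_ne (hmax j (Finset.mem_univ _)) (hX j istar hj)
  have hs : ∀ i, Tendsto (fun k => matBilin (Ak k) (X i0) (X i)) atTop
      (𝓝 (matBilin A (X i0) (X i))) :=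
    fun i => ((continuous_matBilin_A (X i0) (X i)).tendsto A).comp hAk
  have hattn : Tendsto (fun k => attnMap i0 (r k • Ak k) X) atTop (𝓝 (X istar)) := by
    have := tendsto_softmax X istar (fun k i => matBilin (Ak k) (X i0) (X i))
      (fun i => matBilin A (X i0) (X i)) hs hstrict r hr
    simpa only [attnMap, matBilin_smul] using this
  have hhard : ∀ᶠ k in atTop, hardAttnMap i0 (Ak k) X = X istar := by
    have hev : ∀ᶠ k in atTop, ∀ j, j ≠ istar →
        matBilin (Ak k) (X i0) (X j) < matBilin (Ak k) (X i0) (X istar) := by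
      rw [eventually_all]
      intro j
      by_cases hj : j = istar
      · exact Filter.Eventually.of_forall fun k hc => absurd hj hc
      · filter_upwards [(hs j).eventually_lt (hs istar) (hstrict j hj)] with k hk _
        exact hk
    filter_upwards [hev] with k hk
    exact hardAttnMap_eq_of_unique i0 istar (Ak k) X hk
  have hdiff : Tendsto (fun k => attnMap i0 (r k • Ak k) X - hardAttnMap i0 (Ak k) X)
      atTop (𝓝 0) := by
    have h2 : Tendsto (fun k => attnMap i0 (r k • Ak k) X - X istar) atTop (𝓝 0) := by
      simpa [sub_self] using hattn.sub (tendsto_const_nhds (x := X istar))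
    refine Tendsto.congr' ?_ h2
    filter_upwards [hhard] with k hk
    rw [hk]
  simpa using (hdiff.norm.pow 2)

end Stmt14

/-- If `ρ_X` has a bounded continuous density w.r.t. Lebesgue and finite
second moments, then softmax attention converges to hardmax attention in `L²(ρ_X; ℝ^d)`,
uniformly over matrices of unit Frobenius norm:
`lim_{r→∞} sup_{‖A‖=1} ‖ψ(rA) − ψ_∞(A)‖_{L²} = 0`. -/
theorem stmt_14 {n d : ℕ} (hn : 0 < n) (i0 : Fin n) (hi0 : (i0 : ℕ) = n - 1)
    (ρX : Measure (Fin n → EuclideanSpace ℝ (Fin d))) [IsProbabilityMeasure ρX]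
    (ρdens : (Fin n → EuclideanSpace ℝ (Fin d)) → ℝ)
    (hcont : Continuous ρdens) (hnn : ∀ X, 0 ≤ ρdens X) (hbdd : ∃ M, ∀ X, ρdens X ≤ M)
    (hρ : ρX = volume.withDensity fun X => ENNReal.ofReal (ρdens X))
    (hmom : Integrable (fun X => ‖X‖ ^ 2) ρX) :
    ∀ ε > (0 : ℝ), ∃ r₀ : ℝ, ∀ r ≥ r₀, ∀ A : EuclideanSpace ℝ (Fin d × Fin d), ‖A‖ = 1 →
      (∫ X, ‖attnMap i0 (r • A) X - hardAttnMap i0 A X‖ ^ 2 ∂ρX) ≤ ε ^ 2 := by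
  intro ε hε
  rcases Nat.eq_zero_or_pos d with hd | hd
  · subst hd
    refine ⟨0, fun r _ A hA => ?_⟩
    have h0 : ‖A‖ = 0 := by simp [EuclideanSpace.norm_eq]
    rw [h0] at hA
    exact absurd hA (by norm_num)
  by_contra hcon
  push_neg at hcon
  have H : ∀ k : ℕ, ∃ rr : ℝ, (k : ℝ) ≤ rr ∧ ∃ B : EuclideanSpace ℝ (Fin d × Fin d),
      ‖B‖ = 1 ∧ ε ^ 2 < ∫ X, ‖attnMap i0 (rr • B) X - hardAttnMap i0 B X‖ ^ 2 ∂ρX := by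
    intro k
    obtain ⟨rr, hrr, B, hB, hltint⟩ := hcon (k : ℝ)
    exact ⟨rr, hrr, B, hB, hltint⟩
  choose rr hrr B hB hltint using H
  have hBmem : ∀ k, B k ∈ Metric.sphere (0 : EuclideanSpace ℝ (Fin d × Fin d)) 1 := by
    intro k
    simpa [mem_sphere_zero_iff_norm] using hB k
  obtain ⟨Ainf, hAinfmem, φ, hφ, hconv⟩ :=
    (isCompact_sphere (0 : EuclideanSpace ℝ (Fin d × Fin d)) 1).tendsto_subseq hBmem
  have hAinf : ‖Ainf‖ = 1 := mem_sphere_zero_iff_norm.mp hAinfmem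
  have hAinf0 : Ainf ≠ 0 := by
    intro h
    rw [h, norm_zero] at hAinf
    exact one_ne_zero hAinf.symm
  have hrtop : Tendsto (fun k => rr (φ k)) atTop atTop :=
    tendsto_atTop_mono (fun k => le_trans (Nat.cast_le.2 hφ.le_apply) (hrr (φ k)))
      tendsto_natCast_atTop_atTop
  have hac : ρX ≪ (volume : Measure (Fin n → EuclideanSpace ℝ (Fin d))) := by
    rw [hρ]
    exact withDensity_absolutelyContinuous _ _
  have hnull : ρX {X : Fin n → EuclideanSpace ℝ (Fin d) |
      ∃ i j : Fin n, i ≠ j ∧ matBilin Ainf (X i0) (X i) = matBilin Ainf (X i0) (X j)} = 0 :=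
    hac (Stmt14.bad_null i0 Ainf hAinf0)
  have hae : ∀ᵐ X ∂ρX, ∀ i j : Fin n, i ≠ j →
      matBilin Ainf (X i0) (X i) ≠ matBilin Ainf (X i0) (X j) := by
    rw [ae_iff]
    convert hnull using 2
    ext X
    simp only [Set.mem_setOf_eq, not_forall, not_not, exists_prop]
  have hFm : ∀ k : ℕ, AEStronglyMeasurable
      (fun X : Fin n → EuclideanSpace ℝ (Fin d) =>
        ‖attnMap i0 (rr (φ k) • B (φ k)) X - hardAttnMap i0 (B (φ k)) X‖ ^ 2) ρX :=
    fun k => (((Stmt14.continuous_attnMap i0 _).measurable.sub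
      (Stmt14.measurable_hardAttnMap i0 _)).norm.pow_const 2).aestronglyMeasurable
  have hFb : ∀ k : ℕ, ∀ᵐ X ∂ρX,
      ‖‖attnMap i0 (rr (φ k) • B (φ k)) X - hardAttnMap i0 (B (φ k)) X‖ ^ 2‖
        ≤ 4 * ‖X‖ ^ 2 := by
    intro k
    refine Filter.Eventually.of_forall fun X => ?_
    rw [Real.norm_eq_abs, abs_of_nonneg (by positivity)]
    have h1 : ‖attnMap i0 (rr (φ k) • B (φ k)) X - hardAttnMap i0 (B (φ k)) X‖ ≤ 2 * ‖X‖ := by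
      calc ‖attnMap i0 (rr (φ k) • B (φ k)) X - hardAttnMap i0 (B (φ k)) X‖
          ≤ ‖attnMap i0 (rr (φ k) • B (φ k)) X‖ + ‖hardAttnMap i0 (B (φ k)) X‖ :=
            norm_sub_le _ _
        _ ≤ ‖X‖ + ‖X‖ := add_le_add (Stmt14.norm_attnMap_le _ _ _) (Stmt14.norm_hardAttnMap_le _ _ _)
        _ = 2 * ‖X‖ := by ring
    calc ‖attnMap i0 (rr (φ k) • B (φ k)) X - hardAttnMap i0 (B (φ k)) X‖ ^ 2
        ≤ (2 * ‖X‖) ^ 2 := by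
          exact pow_le_pow_left₀ (norm_nonneg _) h1 2
      _ = 4 * ‖X‖ ^ 2 := by ring
  have hbint : Integrable (fun X : Fin n → EuclideanSpace ℝ (Fin d) => 4 * ‖X‖ ^ 2) ρX :=
    hmom.const_mul 4
  have hlim : ∀ᵐ X ∂ρX, Tendsto (fun k =>
      ‖attnMap i0 (rr (φ k) • B (φ k)) X - hardAttnMap i0 (B (φ k)) X‖ ^ 2) atTop (𝓝 0) := by
    filter_upwards [hae] with X hXgood
    exact Stmt14.pointwise_key i0 Ainf (fun k => B (φ k)) hconv
      (fun k => rr (φ k)) hrtop X hXgood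
  have hint0 : Tendsto (fun k => ∫ X,
      ‖attnMap i0 (rr (φ k) • B (φ k)) X - hardAttnMap i0 (B (φ k)) X‖ ^ 2 ∂ρX) atTop
      (𝓝 (∫ _X, (0 : ℝ) ∂ρX)) :=
    tendsto_integral_of_dominated_convergence _ hFm hbint hFb hlim
  rw [integral_zero] at hint0
  obtain ⟨k, hk⟩ := (hint0.eventually_lt_const (by positivity : (0:ℝ) < ε ^ 2)).exists
  exact absurd (hltint (φ k)) (not_lt.2 hk.le)
end

section
/- Let σ: ℝⁿ → ℝⁿ be the softmax function, σ_i(z) = e^{z_i}/Σ_{j=1}^n e^{z_j}. Then for every z, h ∈ ℝⁿ, the first and second differentials of σ satisfy |dσ(z)·h|₁ ≤ 2|h|_∞ and |d²σ(z)·(h,h)|₁ ≤ 6|h|_∞², where |·|₁ and |·|_∞ denote the ℓ¹ and ℓ^∞ norms on ℝⁿ. -/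
open scoped ENNReal NNReal

/-- The softmax function on `ℝⁿ`. -/
noncomputable def softmaxFn {n : ℕ} (z : Fin n → ℝ) : Fin n → ℝ :=
  fun i => Real.exp (z i) / ∑ j, Real.exp (z j)

noncomputable def smDLc {n : ℕ} (z : Fin n → ℝ) (i : Fin n) : (Fin n → ℝ) →L[ℝ] ℝ :=
  softmaxFn z i • ((ContinuousLinearMap.proj i : (Fin n → ℝ) →L[ℝ] ℝ)
    - ∑ j, softmaxFn z j • (ContinuousLinearMap.proj j : (Fin n → ℝ) →L[ℝ] ℝ))

noncomputable def smDL {n : ℕ} (z : Fin n → ℝ) : (Fin n → ℝ) →L[ℝ] (Fin n → ℝ) :=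
  ContinuousLinearMap.pi (smDLc z)

lemma smDL_apply {n : ℕ} (z h : Fin n → ℝ) (i : Fin n) :
    smDL z h i = softmaxFn z i * (h i - ∑ j, softmaxFn z j * h j) := by
  simp [smDL, smDLc, ContinuousLinearMap.sum_apply, mul_comm]

lemma smS_pos {n : ℕ} (i : Fin n) (z : Fin n → ℝ) : 0 < ∑ j, Real.exp (z j) :=
  Finset.sum_pos (fun j _ => Real.exp_pos _) ⟨i, Finset.mem_univ i⟩

lemma softmax_eq_exp {n : ℕ} (i : Fin n) (z : Fin n → ℝ) :
    softmaxFn z i = Real.exp (z i - Real.log (∑ j, Real.exp (z j))) := by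
  rw [Real.exp_sub, Real.exp_log (smS_pos i z)]; rfl

lemma hasFDerivAt_softmax {n : ℕ} (z : Fin n → ℝ) :
    HasFDerivAt (softmaxFn (n := n)) (smDL z) z := by
  rw [hasFDerivAt_pi']
  intro i
  have hS : HasFDerivAt (fun z : Fin n → ℝ => ∑ j, Real.exp (z j))
      (∑ j, Real.exp (z j) • (ContinuousLinearMap.proj j : (Fin n → ℝ) →L[ℝ] ℝ)) z :=
    HasFDerivAt.fun_sum fun j _ => (hasFDerivAt_apply j z).exp
  have h1 : HasFDerivAt (fun z : Fin n → ℝ => z i - Real.log (∑ j, Real.exp (z j)))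
      ((ContinuousLinearMap.proj i : (Fin n → ℝ) →L[ℝ] ℝ)
        - (∑ j, Real.exp (z j))⁻¹ • (∑ j, Real.exp (z j) •
            (ContinuousLinearMap.proj j : (Fin n → ℝ) →L[ℝ] ℝ))) z :=
    (hasFDerivAt_apply i z).sub (hS.log (smS_pos i z).ne')
  have h2 := h1.exp
  have hfun : (fun z : Fin n → ℝ => softmaxFn z i)
      = fun z => Real.exp (z i - Real.log (∑ j, Real.exp (z j))) :=
    funext fun w => softmax_eq_exp i w
  rw [hfun]
  refine h2.congr_fderiv ?_
  symm
  ext v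
  have hSpos := smS_pos i z
  simp only [ContinuousLinearMap.coe_comp', Function.comp_apply, smDL,
    ContinuousLinearMap.proj_pi, smDLc, ContinuousLinearMap.smul_apply,
    ContinuousLinearMap.sub_apply, ContinuousLinearMap.proj_apply,
    ContinuousLinearMap.sum_apply, smul_eq_mul, ← softmax_eq_exp]
  simp only [softmaxFn]
  field_simp
  rw [← Finset.sum_div]
  field_simp

lemma contDiff_softmax {n : ℕ} : ContDiff ℝ 2 (softmaxFn (n := n)) := by
  apply contDiff_pi.mpr
  intro i
  exact ContDiff.div (Real.contDiff_exp.comp (contDiff_pi.mp contDiff_id i))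
    (ContDiff.sum fun j _ => Real.contDiff_exp.comp (contDiff_pi.mp contDiff_id j))
    (fun z => (smS_pos i z).ne')

lemma fderiv_softmax_eq {n : ℕ} : fderiv ℝ (softmaxFn (n := n)) = smDL :=
  funext fun z => (hasFDerivAt_softmax z).fderiv

lemma differentiable_smDL {n : ℕ} : Differentiable ℝ (smDL (n := n)) := by
  rw [← fderiv_softmax_eq]
  exact ((contDiff_softmax (n := n)).fderiv_right (m := 1) (by norm_num)).differentiable one_ne_zero

lemma hasFDerivAt_smDL_component {n : ℕ} (z h : Fin n → ℝ) (i : Fin n) :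
    HasFDerivAt (fun w => smDL w h i)
      (softmaxFn z i • ((0 : (Fin n → ℝ) →L[ℝ] ℝ)
          - ∑ j, h j • ((ContinuousLinearMap.proj j).comp (smDL z)))
        + (h i - ∑ j, softmaxFn z j * h j) • ((ContinuousLinearMap.proj i).comp (smDL z))) z := by
  have hfun : (fun w => smDL w h i)
      = fun w => softmaxFn w i * (h i - ∑ j, softmaxFn w j * h j) :=
    funext fun w => smDL_apply w h i
  rw [hfun]
  have hσ : ∀ j, HasFDerivAt (fun w => softmaxFn w j)
      ((ContinuousLinearMap.proj j).comp (smDL z)) z :=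
    fun j => hasFDerivAt_pi'.mp (hasFDerivAt_softmax z) j
  exact (hσ i).mul ((hasFDerivAt_const (h i) z).sub
    (HasFDerivAt.fun_sum fun j _ => (hσ j).mul_const (h j)))

lemma fderiv_smDL_value {n : ℕ} (z h : Fin n → ℝ) (i : Fin n) :
    fderiv ℝ (smDL (n := n)) z h h i
      = softmaxFn z i * ((h i - ∑ j, softmaxFn z j * h j) ^ 2
          - (∑ j, softmaxFn z j * h j ^ 2) + (∑ j, softmaxFn z j * h j) ^ 2) := by
  set φ : ((Fin n → ℝ) →L[ℝ] (Fin n → ℝ)) →L[ℝ] ℝ :=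
    (ContinuousLinearMap.proj i).comp (ContinuousLinearMap.apply ℝ (Fin n → ℝ) h) with hφ
  have h1 : HasFDerivAt (fun w => smDL w h i) (φ.comp (fderiv ℝ (smDL (n := n)) z)) z :=
    φ.hasFDerivAt.comp z (differentiable_smDL z).hasFDerivAt
  have h2 := hasFDerivAt_smDL_component z h i
  have hu := h1.unique h2
  have hval : fderiv ℝ (smDL (n := n)) z h h i = (φ.comp (fderiv ℝ (smDL (n := n)) z)) h := rfl
  rw [hval, hu]
  simp only [ContinuousLinearMap.add_apply, ContinuousLinearMap.smul_apply,
    ContinuousLinearMap.sub_apply, ContinuousLinearMap.zero_apply,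
    ContinuousLinearMap.sum_apply, ContinuousLinearMap.coe_comp', Function.comp_apply,
    ContinuousLinearMap.proj_apply, smul_eq_mul, smDL_apply]
  have hsum : ∑ j, h j * (softmaxFn z j * (h j - ∑ k, softmaxFn z k * h k))
      = (∑ j, softmaxFn z j * h j ^ 2)
        - (∑ j, softmaxFn z j * h j) * (∑ k, softmaxFn z k * h k) := by
    rw [Finset.sum_mul, ← Finset.sum_sub_distrib]
    exact Finset.sum_congr rfl fun j _ => by ring
  rw [hsum]
  ring

/-- The softmax is (twice) differentiable and its first and second
differentials satisfy `|dσ(z)·h|₁ ≤ 2|h|_∞` and `|d²σ(z)·(h,h)|₁ ≤ 6|h|_∞²`. -/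
theorem stmt_18 {n : ℕ} (z h : Fin n → ℝ) :
    Differentiable ℝ (softmaxFn (n := n)) ∧
    Differentiable ℝ (fderiv ℝ (softmaxFn (n := n))) ∧
    (∑ i, |fderiv ℝ softmaxFn z h i| ≤ 2 * ⨆ i, |h i|) ∧
    (∑ i, |fderiv ℝ (fderiv ℝ (softmaxFn (n := n))) z h h i| ≤ 6 * (⨆ i, |h i|) ^ 2) := by
  refine ⟨contDiff_softmax.differentiable (by norm_num), ?_, ?_, ?_⟩
  · rw [fderiv_softmax_eq]; exact differentiable_smDL
  · cases isEmpty_or_nonempty (Fin n) with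
    | inl hE =>
      simp [Real.iSup_of_isEmpty]
    | inr hNe =>
      set M := ⨆ i, |h i| with hMdef
      have hM : ∀ i, |h i| ≤ M := fun i =>
        hMdef ▸ le_ciSup (Set.Finite.bddAbove (Set.finite_range fun i => |h i|)) i
      have hM0 : 0 ≤ M := le_trans (abs_nonneg _) (hM (Classical.arbitrary _))
      have hσ0 : ∀ i, 0 ≤ softmaxFn z i := fun i =>
        div_nonneg (Real.exp_pos _).le (smS_pos i z).le
      have hsum1 : ∑ i, softmaxFn z i = 1 := by
        simp only [softmaxFn]
        rw [← Finset.sum_div, div_self (smS_pos (Classical.arbitrary _) z).ne']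
      have hm : |∑ j, softmaxFn z j * h j| ≤ M := by
        calc |∑ j, softmaxFn z j * h j| ≤ ∑ j, |softmaxFn z j * h j| :=
              Finset.abs_sum_le_sum_abs _ _
          _ ≤ ∑ j, softmaxFn z j * M := Finset.sum_le_sum fun j _ => by
              rw [abs_mul, abs_of_nonneg (hσ0 j)]
              exact mul_le_mul_of_nonneg_left (hM j) (hσ0 j)
          _ = M := by rw [← Finset.sum_mul, hsum1, one_mul]
      rw [fderiv_softmax_eq]
      calc ∑ i, |smDL z h i|
          = ∑ i, softmaxFn z i * |h i - ∑ j, softmaxFn z j * h j| := by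
            refine Finset.sum_congr rfl fun i _ => ?_
            rw [smDL_apply, abs_mul, abs_of_nonneg (hσ0 i)]
        _ ≤ ∑ i, softmaxFn z i * (2 * M) := Finset.sum_le_sum fun i _ => by
            refine mul_le_mul_of_nonneg_left ?_ (hσ0 i)
            calc |h i - ∑ j, softmaxFn z j * h j| ≤ |h i| + |∑ j, softmaxFn z j * h j| :=
                  abs_sub _ _
              _ ≤ M + M := add_le_add (hM i) hm
              _ = 2 * M := by ring
        _ = 2 * M := by rw [← Finset.sum_mul, hsum1, one_mul]
  · cases isEmpty_or_nonempty (Fin n) with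
    | inl hE =>
      simp [Real.iSup_of_isEmpty]
    | inr hNe =>
      set M := ⨆ i, |h i| with hMdef
      have hM : ∀ i, |h i| ≤ M := fun i =>
        hMdef ▸ le_ciSup (Set.Finite.bddAbove (Set.finite_range fun i => |h i|)) i
      have hM0 : 0 ≤ M := le_trans (abs_nonneg _) (hM (Classical.arbitrary _))
      have hσ0 : ∀ i, 0 ≤ softmaxFn z i := fun i =>
        div_nonneg (Real.exp_pos _).le (smS_pos i z).le
      have hsum1 : ∑ i, softmaxFn z i = 1 := by
        simp only [softmaxFn]
        rw [← Finset.sum_div, div_self (smS_pos (Classical.arbitrary _) z).ne']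
      have hm : |∑ j, softmaxFn z j * h j| ≤ M := by
        calc |∑ j, softmaxFn z j * h j| ≤ ∑ j, |softmaxFn z j * h j| :=
              Finset.abs_sum_le_sum_abs _ _
          _ ≤ ∑ j, softmaxFn z j * M := Finset.sum_le_sum fun j _ => by
              rw [abs_mul, abs_of_nonneg (hσ0 j)]
              exact mul_le_mul_of_nonneg_left (hM j) (hσ0 j)
          _ = M := by rw [← Finset.sum_mul, hsum1, one_mul]
      have hQ0 : 0 ≤ ∑ j, softmaxFn z j * h j ^ 2 :=
        Finset.sum_nonneg fun j _ => mul_nonneg (hσ0 j) (sq_nonneg _)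
      have hQ : ∑ j, softmaxFn z j * h j ^ 2 ≤ M ^ 2 := by
        calc ∑ j, softmaxFn z j * h j ^ 2 ≤ ∑ j, softmaxFn z j * M ^ 2 :=
              Finset.sum_le_sum fun j _ => by
                refine mul_le_mul_of_nonneg_left ?_ (hσ0 j)
                calc h j ^ 2 = |h j| ^ 2 := (sq_abs _).symm
                  _ ≤ M ^ 2 := pow_le_pow_left₀ (abs_nonneg _) (hM j) 2
          _ = M ^ 2 := by rw [← Finset.sum_mul, hsum1, one_mul]
      have hm2 : (∑ j, softmaxFn z j * h j) ^ 2 ≤ M ^ 2 := by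
        calc (∑ j, softmaxFn z j * h j) ^ 2 = |∑ j, softmaxFn z j * h j| ^ 2 := (sq_abs _).symm
          _ ≤ M ^ 2 := pow_le_pow_left₀ (abs_nonneg _) hm 2
      have hfd2 : fderiv ℝ (fderiv ℝ (softmaxFn (n := n))) = fderiv ℝ (smDL (n := n)) := by
        rw [fderiv_softmax_eq]
      rw [hfd2]
      calc ∑ i, |fderiv ℝ (smDL (n := n)) z h h i|
          ≤ ∑ i, softmaxFn z i * (6 * M ^ 2) := by
            refine Finset.sum_le_sum fun i _ => ?_
            rw [fderiv_smDL_value, abs_mul, abs_of_nonneg (hσ0 i)]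
            refine mul_le_mul_of_nonneg_left ?_ (hσ0 i)
            have hx : (h i - ∑ j, softmaxFn z j * h j) ^ 2 ≤ (2 * M) ^ 2 := by
              have h1 : |h i - ∑ j, softmaxFn z j * h j| ≤ 2 * M := by
                calc |h i - ∑ j, softmaxFn z j * h j|
                    ≤ |h i| + |∑ j, softmaxFn z j * h j| := abs_sub _ _
                  _ ≤ M + M := add_le_add (hM i) hm
                  _ = 2 * M := by ring
              calc (h i - ∑ j, softmaxFn z j * h j) ^ 2
                  = |h i - ∑ j, softmaxFn z j * h j| ^ 2 := (sq_abs _).symm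
                _ ≤ (2 * M) ^ 2 := pow_le_pow_left₀ (abs_nonneg _) h1 2
            have hx0 : 0 ≤ (h i - ∑ j, softmaxFn z j * h j) ^ 2 := sq_nonneg _
            have habs : |(h i - ∑ j, softmaxFn z j * h j) ^ 2
                - (∑ j, softmaxFn z j * h j ^ 2) + (∑ j, softmaxFn z j * h j) ^ 2|
                ≤ (h i - ∑ j, softmaxFn z j * h j) ^ 2
                  + (∑ j, softmaxFn z j * h j ^ 2) + (∑ j, softmaxFn z j * h j) ^ 2 := by
              have := abs_add_le ((h i - ∑ j, softmaxFn z j * h j) ^ 2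
                - (∑ j, softmaxFn z j * h j ^ 2)) ((∑ j, softmaxFn z j * h j) ^ 2)
              have h2 := abs_sub ((h i - ∑ j, softmaxFn z j * h j) ^ 2)
                (∑ j, softmaxFn z j * h j ^ 2)
              rw [abs_of_nonneg hx0, abs_of_nonneg hQ0] at h2
              rw [abs_of_nonneg (sq_nonneg (∑ j, softmaxFn z j * h j))] at this
              linarith
            nlinarith [habs, hx, hQ, hm2]
        _ = 6 * M ^ 2 := by rw [← Finset.sum_mul, hsum1, one_mul]
end
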